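/- arXiv:2309.12128 — 5 statements merged into one kernel-verified Lean document; each statement's English description precedes it below -/
import Mathlib

section
/- Suppose that σ₀ := σ_min(J_g(θ₀)) > 0 and that σ_min(J_g(θ(t))) ≥ σ₀/2 for all t ≥ 0. Then for all t ≥ 0, ∫₀^t ‖θ'(s)‖ ds ≤ (2/(σ₀·σ_F))·(ψ(L(y(0))) − ψ(L(y(t)))) ≤ (2/(σ₀·σ_F))·ψ(L(y(0))); in particular ‖θ'(·)‖ ∈ L¹([0,∞)) and θ(t) converges to a limit θ∞ ∈ ℝ^p as t → ∞. -/
open Filter MeasureTheory ProbabilityTheory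
open scoped Topology NNReal

noncomputable def sigmaMin {E F : Type*} [NormedAddCommGroup E] [InnerProductSpace ℝ E]
    [CompleteSpace E] [NormedAddCommGroup F] [InnerProductSpace ℝ F] [CompleteSpace F]
    (A : E →L[ℝ] F) : ℝ :=
  ⨅ w : {w : F // ‖w‖ = 1}, ‖ContinuousLinearMap.adjoint A w.1‖

lemma sigmaMin_lower {E F : Type*} [NormedAddCommGroup E] [InnerProductSpace ℝ E]
    [CompleteSpace E] [NormedAddCommGroup F] [InnerProductSpace ℝ F] [CompleteSpace F]
    (A : E →L[ℝ] F) {c : ℝ} (hc : c ≤ sigmaMin A) (w : F) :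
    c * ‖w‖ ≤ ‖ContinuousLinearMap.adjoint A w‖ := by
  rcases eq_or_ne w 0 with rfl | hw
  · simp
  · have hwn : (0:ℝ) < ‖w‖ := norm_pos_iff.2 hw
    have hmem : ‖(‖w‖⁻¹ • w)‖ = 1 := by
      rw [norm_smul, norm_inv, norm_norm, inv_mul_cancel₀ hwn.ne']
    have hbdd : BddBelow (Set.range fun w : {w : F // ‖w‖ = 1} =>
        ‖ContinuousLinearMap.adjoint A w.1‖) :=
      ⟨0, by rintro x ⟨v, rfl⟩; exact norm_nonneg _⟩
    have h1 : sigmaMin A ≤ ‖ContinuousLinearMap.adjoint A (‖w‖⁻¹ • w)‖ :=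
      ciInf_le hbdd ⟨‖w‖⁻¹ • w, hmem⟩
    rw [_root_.map_smul, norm_smul, norm_inv, norm_norm] at h1
    have := mul_le_mul_of_nonneg_right (hc.trans h1) hwn.le
    calc c * ‖w‖ ≤ ‖w‖⁻¹ * ‖ContinuousLinearMap.adjoint A w‖ * ‖w‖ := this
      _ = ‖ContinuousLinearMap.adjoint A w‖ := by field_simp

lemma gradient_inner {E : Type*} [NormedAddCommGroup E] [InnerProductSpace ℝ E]
    [CompleteSpace E] (f : E → ℝ) (x v : E) :
    inner ℝ (gradient f x) v = fderiv ℝ f x v := by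
  rw [gradient, InnerProductSpace.toDual_symm_apply]

lemma gradient_comp_formula {P N M : Type*}
    [NormedAddCommGroup P] [InnerProductSpace ℝ P] [CompleteSpace P]
    [NormedAddCommGroup N] [InnerProductSpace ℝ N] [CompleteSpace N]
    [NormedAddCommGroup M] [InnerProductSpace ℝ M] [CompleteSpace M]
    (L : M → ℝ) (F : N → M) (g : P → N)
    (hL : Differentiable ℝ L) (hF : Differentiable ℝ F) (hg : Differentiable ℝ g) (x : P) :
    gradient (fun q => L (F (g q))) x =
      ContinuousLinearMap.adjoint (fderiv ℝ g x)
        (ContinuousLinearMap.adjoint (fderiv ℝ F (g x)) (gradient L (F (g x)))) := by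
  apply ext_inner_right ℝ
  intro v
  have hcomp : fderiv ℝ (fun q => L (F (g q))) x =
      ((fderiv ℝ L (F (g x))).comp ((fderiv ℝ F (g x)).comp (fderiv ℝ g x))) := by
    rw [show (fun q => L (F (g q))) = L ∘ (F ∘ g) from rfl,
      fderiv_comp x (hL _) ((hF _).comp x (hg _)), fderiv_comp x (hF _) (hg _)]
    rfl
  rw [gradient_inner, hcomp, ContinuousLinearMap.adjoint_inner_left,
    ContinuousLinearMap.adjoint_inner_left, gradient_inner]
  rfl

set_option maxHeartbeats 2000000 in
theorem stmt2
    {n m p : ℕ} (hn : 0 < n) (hm : 0 < m) (hp : 0 < p)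
    (L : EuclideanSpace ℝ (Fin m) → ℝ)
    (F : EuclideanSpace ℝ (Fin n) → EuclideanSpace ℝ (Fin m))
    (g : EuclideanSpace ℝ (Fin p) → EuclideanSpace ℝ (Fin n))
    (hL : ContDiff ℝ 1 L)
    (hLnonneg : ∀ v, 0 ≤ L v) (hLmin : ∃ v, L v = 0)
    (hLgrad : ∀ s : Set (EuclideanSpace ℝ (Fin m)), Bornology.IsBounded s →
      ∃ K : ℝ≥0, LipschitzOnWith K (fun v => gradient L v) s)
    (hF : ContDiff ℝ 1 F)
    (hJF : ∀ s : Set (EuclideanSpace ℝ (Fin n)), Bornology.IsBounded s →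
      ∃ K : ℝ≥0, LipschitzOnWith K (fun x => fderiv ℝ F x) s)
    (hg : ContDiff ℝ 1 g)
    (hJg : ∀ s : Set (EuclideanSpace ℝ (Fin p)), Bornology.IsBounded s →
      ∃ K : ℝ≥0, LipschitzOnWith K (fun q => fderiv ℝ g q) s)
    (θ θ' : ℝ → EuclideanSpace ℝ (Fin p)) (θ₀ : EuclideanSpace ℝ (Fin p))
    (hθ0 : θ 0 = θ₀)
    (hθd : ∀ t ≥ (0:ℝ), HasDerivAt θ (θ' t) t)
    (hθcont : ContinuousOn θ' (Set.Ici 0))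
    (hflow : ∀ t ≥ (0:ℝ), θ' t = -gradient (fun q => L (F (g q))) (θ t))
    (r₀ : ℝ) (hr₀ : L (F (g (θ 0))) < r₀)
    (ψ ψ' : ℝ → ℝ) (hψ0 : ψ 0 = 0)
    (hψcont : ContinuousOn ψ (Set.Ico 0 r₀))
    (hψmono : StrictMonoOn ψ (Set.Ico 0 r₀))
    (hψd : ∀ s ∈ Set.Ioo (0:ℝ) r₀, HasDerivAt ψ (ψ' s) s)
    (hKL : ∀ v : EuclideanSpace ℝ (Fin m), 0 < L v → L v < r₀ →
      1 ≤ ψ' (L v) * ‖gradient L v‖)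
    (σF : ℝ) (hσF : 0 < σF)
    (hinj : ∀ t ≥ (0:ℝ),
      gradient L (F (g (θ t))) ∈ LinearMap.range (fderiv ℝ F (g (θ t)) :
          EuclideanSpace ℝ (Fin n) →ₗ[ℝ] EuclideanSpace ℝ (Fin m)) ∧
      ∀ z ∈ LinearMap.range (fderiv ℝ F (g (θ t)) :
          EuclideanSpace ℝ (Fin n) →ₗ[ℝ] EuclideanSpace ℝ (Fin m)),
        σF * ‖z‖ ≤ ‖ContinuousLinearMap.adjoint (fderiv ℝ F (g (θ t))) z‖)
    (σ₀ : ℝ) (hσ₀ : σ₀ = sigmaMin (fderiv ℝ g θ₀)) (hσ₀pos : 0 < σ₀)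
    (hσt : ∀ t ≥ (0:ℝ), σ₀ / 2 ≤ sigmaMin (fderiv ℝ g (θ t))) :
    (∀ t ≥ (0:ℝ),
      (∫ s in (0:ℝ)..t, ‖θ' s‖) ≤
        2 / (σ₀ * σF) * (ψ (L (F (g (θ 0)))) - ψ (L (F (g (θ t))))) ∧
      2 / (σ₀ * σF) * (ψ (L (F (g (θ 0)))) - ψ (L (F (g (θ t))))) ≤
        2 / (σ₀ * σF) * ψ (L (F (g (θ 0))))) ∧
    MeasureTheory.IntegrableOn (fun s => ‖θ' s‖) (Set.Ici 0) ∧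
    ∃ θlim : EuclideanSpace ℝ (Fin p), Tendsto θ atTop (𝓝 θlim) := by
  have hLd : Differentiable ℝ L := hL.differentiable one_ne_zero
  have hFd : Differentiable ℝ F := hF.differentiable one_ne_zero
  have hgd : Differentiable ℝ g := hg.differentiable one_ne_zero
  have hfC : ContDiff ℝ 1 (fun q => L (F (g q))) := hL.comp (hF.comp hg)
  have hfd : Differentiable ℝ (fun q => L (F (g q))) := hfC.differentiable one_ne_zero
  set G : ℝ → EuclideanSpace ℝ (Fin p) := fun t => gradient (fun q => L (F (g q))) (θ t)
    with hGdef
  set u : ℝ → EuclideanSpace ℝ (Fin m) := fun t => gradient L (F (g (θ t))) with hudef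
  set φ : ℝ → ℝ := fun t => L (F (g (θ t))) with hφdef
  have hφeq : ∀ t, L (F (g (θ t))) = φ t := fun _ => rfl
  simp only [hφeq]
  have hGform : ∀ t, G t = ContinuousLinearMap.adjoint (fderiv ℝ g (θ t))
      (ContinuousLinearMap.adjoint (fderiv ℝ F (g (θ t))) (u t)) :=
    fun t => gradient_comp_formula L F g hLd hFd hgd (θ t)
  have hθ'G : ∀ t ≥ (0:ℝ), θ' t = -G t := fun t ht => hflow t ht
  have hnorm : ∀ t ≥ (0:ℝ), ‖θ' t‖ = ‖G t‖ := by
    intro t ht; rw [hθ'G t ht, norm_neg]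
  have hc : (0:ℝ) < σ₀ * σF / 2 := by positivity
  set c := σ₀ * σF / 2 with hcdef
  have hGlow : ∀ t ≥ (0:ℝ), c * ‖u t‖ ≤ ‖G t‖ := by
    intro t ht
    have h1 := (hinj t ht).2 _ ((hinj t ht).1)
    have h2 := sigmaMin_lower (fderiv ℝ g (θ t)) (hσt t ht)
      (ContinuousLinearMap.adjoint (fderiv ℝ F (g (θ t))) (u t))
    rw [hGform t]
    calc c * ‖u t‖ = (σ₀/2) * (σF * ‖u t‖) := by rw [hcdef]; ring
      _ ≤ (σ₀/2) * ‖ContinuousLinearMap.adjoint (fderiv ℝ F (g (θ t))) (u t)‖ :=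
        mul_le_mul_of_nonneg_left h1 (by positivity)
      _ ≤ _ := h2
  have hφd : ∀ t ≥ (0:ℝ), HasDerivAt φ (-‖G t‖^2) t := by
    intro t ht
    have h0 : HasDerivAt (fun s => L (F (g (θ s))))
        (fderiv ℝ (fun q => L (F (g q))) (θ t) (θ' t)) t :=
      (hfd (θ t)).hasFDerivAt.comp_hasDerivAt t (hθd t ht)
    have hv : fderiv ℝ (fun q => L (F (g q))) (θ t) (θ' t) = -‖G t‖^2 := by
      rw [hθ'G t ht, map_neg, ← gradient_inner, real_inner_self_eq_norm_sq]
    rwa [hv] at h0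
  have hθcontOn : ContinuousOn θ (Set.Ici 0) :=
    fun t ht => ((hθd t ht).continuousAt).continuousWithinAt
  have hφcont : ContinuousOn φ (Set.Ici 0) := hfC.continuous.comp_continuousOn hθcontOn
  have hφanti : AntitoneOn φ (Set.Ici 0) := by
    apply antitoneOn_of_deriv_nonpos (convex_Ici 0) hφcont
    · intro x hx; rw [interior_Ici] at hx
      exact ((hφd x hx.le).differentiableAt).differentiableWithinAt
    · intro x hx; rw [interior_Ici] at hx
      rw [(hφd x hx.le).deriv]
      exact neg_nonpos.2 (sq_nonneg _)
  have hφ0lt : φ 0 < r₀ := hr₀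
  have hφnonneg : ∀ t, 0 ≤ φ t := fun t => hLnonneg _
  have hφub : ∀ t ≥ (0:ℝ), φ t ≤ φ 0 := fun t ht => hφanti Set.self_mem_Ici ht ht
  have hr₀pos : 0 < r₀ := lt_of_le_of_lt (hφnonneg 0) hφ0lt
  have hφmem : ∀ t ≥ (0:ℝ), φ t ∈ Set.Ico 0 r₀ :=
    fun t ht => ⟨hφnonneg t, lt_of_le_of_lt (hφub t ht) hφ0lt⟩
  have hψφ0 : ∀ t ≥ (0:ℝ), 0 ≤ ψ (φ t) := by
    intro t ht
    have := hψmono.monotoneOn ⟨le_rfl, hr₀pos⟩ (hφmem t ht) (hφnonneg t)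
    rwa [hψ0] at this
  have hθ'norm_cont : ContinuousOn (fun s => ‖θ' s‖) (Set.Ici 0) := hθcont.norm
  have hII : ∀ a b : ℝ, 0 ≤ a → 0 ≤ b →
      IntervalIntegrable (fun s => ‖θ' s‖) MeasureTheory.volume a b := by
    intro a b ha hb
    apply ContinuousOn.intervalIntegrable
    apply hθ'norm_cont.mono
    intro x hx
    rcases Set.mem_uIcc.1 hx with h | h
    · exact le_trans ha h.1
    · exact le_trans hb h.1
  have keyA : ∀ T, 0 ≤ T → 0 < φ T →
      c * (∫ s in (0:ℝ)..T, ‖θ' s‖) ≤ ψ (φ 0) - ψ (φ T) := by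
    intro T hT hφT
    set W : ℝ → ℝ := fun t => ψ (φ t) + c * ∫ s in (0:ℝ)..t, ‖θ' s‖ with hWdef
    have hsub : Set.Icc (0:ℝ) T ⊆ Set.Ici 0 := Set.Icc_subset_Ici_self
    have hφpos : ∀ t ∈ Set.Icc (0:ℝ) T, 0 < φ t := fun t ht =>
      lt_of_lt_of_le hφT (hφanti (hsub ht) (Set.mem_Ici.2 hT) ht.2)
    have hint : MeasureTheory.IntegrableOn (fun s => ‖θ' s‖) (Set.Icc (0:ℝ) T) :=
      (hθ'norm_cont.mono hsub).integrableOn_compact isCompact_Icc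
    have hWcont : ContinuousOn W (Set.Icc 0 T) := by
      apply ContinuousOn.add
      · exact hψcont.comp (hφcont.mono hsub) (fun t ht => hφmem t (hsub ht))
      · apply continuousOn_const.mul
        have := intervalIntegral.continuousOn_primitive_interval
          (μ := MeasureTheory.volume) (a := (0:ℝ)) (b := T)
          (f := fun s => ‖θ' s‖) (by rwa [Set.uIcc_of_le hT])
        rwa [Set.uIcc_of_le hT] at this
    have hWd : ∀ t ∈ Set.Ioo (0:ℝ) T,
        HasDerivAt W (ψ' (φ t) * (-‖G t‖^2) + c * ‖θ' t‖) t := by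
      intro t ht
      have ht0 : (0:ℝ) ≤ t := ht.1.le
      have h1 : HasDerivAt (fun s => ψ (φ s)) (ψ' (φ t) * (-‖G t‖^2)) t :=
        (hψd (φ t) ⟨hφpos t ⟨ht.1.le, ht.2.le⟩, (hφmem t ht0).2⟩).comp t (hφd t ht0)
      have h2 : HasDerivAt (fun x => ∫ s in (0:ℝ)..x, ‖θ' s‖) (‖θ' t‖) t := by
        apply intervalIntegral.integral_hasDerivAt_right (hII 0 t le_rfl ht0)
        · exact ContinuousOn.stronglyMeasurableAtFilter isOpen_Ioi
            (hθ'norm_cont.mono Set.Ioi_subset_Ici_self) t ht.1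
        · exact hθ'norm_cont.continuousAt (Ici_mem_nhds ht.1)
      exact h1.add (h2.const_mul c)
    have hanti : AntitoneOn W (Set.Icc 0 T) := by
      apply antitoneOn_of_deriv_nonpos (convex_Icc 0 T) hWcont
      · intro x hx; rw [interior_Icc] at hx
        exact ((hWd x hx).differentiableAt).differentiableWithinAt
      · intro x hx; rw [interior_Icc] at hx
        rw [(hWd x hx).deriv]
        have hx0 : (0:ℝ) ≤ x := hx.1.le
        have hKLx := hKL (F (g (θ x))) (hφpos x ⟨hx.1.le, hx.2.le⟩) (hφmem x hx0).2
        have hlow := hGlow x hx0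
        have hnx := hnorm x hx0
        have hun : (0:ℝ) ≤ ‖u x‖ := norm_nonneg _
        have hGn : (0:ℝ) ≤ ‖G x‖ := norm_nonneg _
        rw [hnx]
        have hψpos : 0 < ψ' (φ x) := by
          by_contra h
          push_neg at h
          nlinarith [mul_nonpos_of_nonpos_of_nonneg h hun]
        nlinarith [mul_le_mul_of_nonneg_left hlow (mul_nonneg hψpos.le hGn),
          mul_le_mul_of_nonneg_left hKLx (mul_nonneg hc.le hGn)]
    have hW0 : W 0 = ψ (φ 0) := by
      simp [hWdef, intervalIntegral.integral_same]
    have := hanti (Set.left_mem_Icc.2 hT) (Set.right_mem_Icc.2 hT) hT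
    rw [hW0] at this
    simp only [hWdef] at this
    linarith
  have key : ∀ T, 0 ≤ T →
      c * (∫ s in (0:ℝ)..T, ‖θ' s‖) ≤ ψ (φ 0) - ψ (φ T) := by
    intro T hT
    by_cases hφT : 0 < φ T
    · exact keyA T hT hφT
    · have hφT0 : φ T = 0 := le_antisymm (not_lt.1 hφT) (hφnonneg T)
      have hu0 : ∀ t ≥ (0:ℝ), φ t = 0 → θ' t = 0 := by
        intro t ht h0
        have hmin : IsLocalMin L (F (g (θ t))) :=
          Filter.Eventually.of_forall (fun v => by
            show L (F (g (θ t))) ≤ L v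
            rw [hφeq t, h0]; exact hLnonneg v)
        have hfz : fderiv ℝ L (F (g (θ t))) = 0 := hmin.fderiv_eq_zero
        have hu : u t = 0 := by
          apply ext_inner_right ℝ
          intro v
          rw [show u t = gradient L (F (g (θ t))) from rfl, gradient_inner, hfz,
            inner_zero_left]
          rfl
        rw [hθ'G t ht, hGform t, hu, map_zero, map_zero, neg_zero]
      set S := Set.Icc (0:ℝ) T ∩ φ ⁻¹' {0} with hSdef
      have hsub : Set.Icc (0:ℝ) T ⊆ Set.Ici 0 := Set.Icc_subset_Ici_self
      have hSclosed : IsClosed S :=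
        (hφcont.mono hsub).preimage_isClosed_of_isClosed isClosed_Icc isClosed_singleton
      have hSne : S.Nonempty := ⟨T, ⟨Set.right_mem_Icc.2 hT, hφT0⟩⟩
      have hSbdd : BddBelow S := ⟨0, fun x hx => hx.1.1⟩
      set t₀ := sInf S with ht₀def
      have ht₀S : t₀ ∈ S := hSclosed.csInf_mem hSne hSbdd
      have ht₀0 : 0 ≤ t₀ := ht₀S.1.1
      have ht₀T : t₀ ≤ T := ht₀S.1.2
      have hφt₀ : φ t₀ = 0 := ht₀S.2
      have hzero : ∀ t, t₀ ≤ t → t ≤ T → θ' t = 0 := by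
        intro t h1 h2
        apply hu0 t (ht₀0.trans h1)
        have hle := hφanti (Set.mem_Ici.2 ht₀0) (Set.mem_Ici.2 (ht₀0.trans h1)) h1
        rw [hφt₀] at hle
        exact le_antisymm hle (hφnonneg t)
      have h2z : (∫ s in t₀..T, ‖θ' s‖) = 0 := by
        rw [intervalIntegral.integral_congr (g := fun _ => (0:ℝ)), intervalIntegral.integral_zero]
        intro x hx
        rw [Set.uIcc_of_le ht₀T] at hx
        simp [hzero x hx.1 hx.2]
      have hadd := intervalIntegral.integral_add_adjacent_intervals
        (hII 0 t₀ le_rfl ht₀0) (hII t₀ T ht₀0 (ht₀0.trans ht₀T))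
      have hsplit : (∫ s in (0:ℝ)..T, ‖θ' s‖) = ∫ s in (0:ℝ)..t₀, ‖θ' s‖ := by
        rw [← hadd, h2z, add_zero]
      have hψT : ψ (φ T) = 0 := by rw [hφT0, hψ0]
      rw [hsplit, hψT, sub_zero]
      rcases eq_or_lt_of_le ht₀0 with h | h
      · rw [← h, intervalIntegral.integral_same, mul_zero]
        exact hψφ0 0 le_rfl
      · have hint : MeasureTheory.IntegrableOn (fun s => ‖θ' s‖) (Set.uIcc (0:ℝ) t₀) := by
          rw [Set.uIcc_of_le ht₀0]
          exact (hθ'norm_cont.mono Set.Icc_subset_Ici_self).integrableOn_compact isCompact_Icc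
        have hcont2 := intervalIntegral.continuousOn_primitive_interval
          (μ := MeasureTheory.volume) (a := (0:ℝ)) (b := t₀) (f := fun s => ‖θ' s‖) hint
        rw [Set.uIcc_of_le ht₀0] at hcont2
        have htend : Tendsto (fun x => c * ∫ s in (0:ℝ)..x, ‖θ' s‖) (𝓝[Set.Ico 0 t₀] t₀)
            (𝓝 (c * ∫ s in (0:ℝ)..t₀, ‖θ' s‖)) :=
          Filter.Tendsto.const_mul c
            ((hcont2 t₀ ⟨ht₀0, le_rfl⟩).mono_left (nhdsWithin_mono _ Set.Ico_subset_Icc_self))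
        have hNB : (𝓝[Set.Ico (0:ℝ) t₀] t₀).NeBot := by
          rw [← mem_closure_iff_nhdsWithin_neBot, closure_Ico h.ne]
          exact ⟨ht₀0, le_rfl⟩
        apply le_of_tendsto htend
        filter_upwards [self_mem_nhdsWithin] with x hx
        have hφx : 0 < φ x := by
          rcases (hφnonneg x).lt_or_eq with hlt | heq
          · exact hlt
          · exfalso
            have hxS : x ∈ S := ⟨⟨hx.1, hx.2.le.trans ht₀T⟩,
              Set.mem_preimage.2 (Set.mem_singleton_iff.2 heq.symm)⟩
            exact absurd (csInf_le hSbdd hxS) (not_le.2 hx.2)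
        have hkx := keyA x hx.1 hφx
        have h0ψ := hψφ0 x hx.1
        linarith
  have hInt : MeasureTheory.IntegrableOn (fun s => ‖θ' s‖) (Set.Ici 0) := by
    have hM : ∀ i : ℝ, 0 ≤ i → (∫ s in (0:ℝ)..i, ‖θ' s‖) ≤ ψ (φ 0) / c := by
      intro i hi
      have hk := key i hi
      have hψi := hψφ0 i hi
      rw [le_div_iff₀ hc]
      linarith
    rw [integrableOn_Ici_iff_integrableOn_Ioi]
    refine MeasureTheory.integrableOn_Ioi_of_intervalIntegral_norm_bounded (l := atTop)
      (b := fun i : ℕ => (i:ℝ)) (ψ (φ 0)/c) 0 (fun i => ?_) tendsto_natCast_atTop_atTop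
      (Filter.Eventually.of_forall fun i => ?_)
    · exact (intervalIntegrable_iff_integrableOn_Ioc_of_le (Nat.cast_nonneg i)).1
        (hII 0 i le_rfl (Nat.cast_nonneg i))
    · simp only [norm_norm]
      exact hM i (Nat.cast_nonneg i)
  refine ⟨?_, hInt, ?_⟩
  · intro t ht
    have hk := key t ht
    have hψt := hψφ0 t ht
    have h2c : 2 / (σ₀ * σF) * (ψ (φ 0) - ψ (φ t)) = (ψ (φ 0) - ψ (φ t)) / c := by
      rw [hcdef]; field_simp
    constructor
    · rw [h2c]
      rw [le_div_iff₀ hc]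
      linarith
    · apply mul_le_mul_of_nonneg_left _ (by positivity)
      linarith
  · have hθ'int : MeasureTheory.IntegrableOn θ' (Set.Ioi 0) := by
      apply MeasureTheory.Integrable.mono' (hInt.mono_set Set.Ioi_subset_Ici_self)
      · exact (hθcont.mono Set.Ioi_subset_Ici_self).aestronglyMeasurable measurableSet_Ioi
      · exact Filter.Eventually.of_forall (fun s => le_rfl)
    have hftc : ∀ T, 0 ≤ T → θ T = θ 0 + ∫ s in (0:ℝ)..T, θ' s := by
      intro T hT
      have h1 : ∀ x ∈ Set.uIcc (0:ℝ) T, HasDerivAt θ (θ' x) x := by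
        intro x hx; rw [Set.uIcc_of_le hT] at hx; exact hθd x hx.1
      have h2 : IntervalIntegrable θ' MeasureTheory.volume 0 T :=
        (hθcont.mono (by rw [Set.uIcc_of_le hT]; exact fun x hx => hx.1)).intervalIntegrable
      rw [intervalIntegral.integral_eq_sub_of_hasDerivAt h1 h2]
      abel
    refine ⟨θ 0 + ∫ s in Set.Ioi (0:ℝ), θ' s, ?_⟩
    have h1 : Tendsto (fun T => θ 0 + ∫ s in (0:ℝ)..T, θ' s) atTop
        (𝓝 (θ 0 + ∫ s in Set.Ioi (0:ℝ), θ' s)) :=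
      tendsto_const_nhds.add
        (MeasureTheory.intervalIntegral_tendsto_integral_Ioi 0 hθ'int tendsto_id)
    apply h1.congr'
    filter_upwards [eventually_ge_atTop (0:ℝ)] with T hT
    exact (hftc T hT).symm
end

section
/- Under the gradient-flow setup with the KL assumption, the restricted injectivity assumption on B̄(θ₀, R), and the initialization condition, the whole trajectory satisfies θ(t) ∈ B̄(θ₀, R') and σ_min(J_g(θ(t))) ≥ σ₀/2 for every t ≥ 0. -/
set_option maxHeartbeats 1000000


open Filter MeasureTheory ProbabilityTheory
open scoped Topology NNReal

lemma adjoint_sub_norm {E F : Type*} [NormedAddCommGroup E] [InnerProductSpace ℝ E] [CompleteSpace E]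
    [NormedAddCommGroup F] [InnerProductSpace ℝ F] [CompleteSpace F]
    (A B : E →L[ℝ] F) (w : F) :
    ‖ContinuousLinearMap.adjoint A w - ContinuousLinearMap.adjoint B w‖ ≤ ‖A - B‖ * ‖w‖ := by
  have he : ContinuousLinearMap.adjoint A w - ContinuousLinearMap.adjoint B w
      = (ContinuousLinearMap.adjoint (A - B)) w := by
    rw [map_sub]; rfl
  rw [he]
  calc ‖(ContinuousLinearMap.adjoint (A - B)) w‖
      ≤ ‖ContinuousLinearMap.adjoint (A - B)‖ * ‖w‖ := ContinuousLinearMap.le_opNorm _ _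
    _ = ‖A - B‖ * ‖w‖ := by rw [LinearIsometryEquiv.norm_map]

open InnerProductSpace in
lemma gradient_comp_eq' {E E' : Type*} [NormedAddCommGroup E] [InnerProductSpace ℝ E] [CompleteSpace E]
    [NormedAddCommGroup E'] [InnerProductSpace ℝ E'] [CompleteSpace E']
    (h : E' → ℝ) (A : E → E') (x : E)
    (hh : DifferentiableAt ℝ h (A x)) (hA : DifferentiableAt ℝ A x) :
    gradient (fun q => h (A q)) x
      = ContinuousLinearMap.adjoint (fderiv ℝ A x) (gradient h (A x)) := by
  have hfd : fderiv ℝ (fun q => h (A q)) x = (fderiv ℝ h (A x)).comp (fderiv ℝ A x) := by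
    have := fderiv_comp x hh hA
    simpa [Function.comp_def] using this
  apply ext_inner_right ℝ
  intro v
  unfold gradient
  rw [toDual_symm_apply, ContinuousLinearMap.adjoint_inner_left, toDual_symm_apply, hfd]
  rfl

theorem stmt3
    {n m p : ℕ} (hn : 0 < n) (hm : 0 < m) (hp : 0 < p)
    (L : EuclideanSpace ℝ (Fin m) → ℝ)
    (F : EuclideanSpace ℝ (Fin n) → EuclideanSpace ℝ (Fin m))
    (g : EuclideanSpace ℝ (Fin p) → EuclideanSpace ℝ (Fin n))
    (hL : ContDiff ℝ 1 L)
    (hLnonneg : ∀ v, 0 ≤ L v) (hLmin : ∃ v, L v = 0)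
    (hLgrad : ∀ s : Set (EuclideanSpace ℝ (Fin m)), Bornology.IsBounded s →
      ∃ K : ℝ≥0, LipschitzOnWith K (fun v => gradient L v) s)
    (hF : ContDiff ℝ 1 F)
    (hJF : ∀ s : Set (EuclideanSpace ℝ (Fin n)), Bornology.IsBounded s →
      ∃ K : ℝ≥0, LipschitzOnWith K (fun x => fderiv ℝ F x) s)
    (hg : ContDiff ℝ 1 g)
    (hJg : ∀ s : Set (EuclideanSpace ℝ (Fin p)), Bornology.IsBounded s →
      ∃ K : ℝ≥0, LipschitzOnWith K (fun q => fderiv ℝ g q) s)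
    (θ θ' : ℝ → EuclideanSpace ℝ (Fin p)) (θ₀ : EuclideanSpace ℝ (Fin p))
    (hθ0 : θ 0 = θ₀)
    (hθd : ∀ t ≥ (0:ℝ), HasDerivAt θ (θ' t) t)
    (hθcont : ContinuousOn θ' (Set.Ici 0))
    (hflow : ∀ t ≥ (0:ℝ), θ' t = -gradient (fun q => L (F (g q))) (θ t))
    (r₀ : ℝ) (hr₀ : L (F (g (θ 0))) < r₀)
    (ψ ψ' : ℝ → ℝ) (hψ0 : ψ 0 = 0)
    (hψcont : ContinuousOn ψ (Set.Ico 0 r₀))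
    (hψmono : StrictMonoOn ψ (Set.Ico 0 r₀))
    (hψd : ∀ s ∈ Set.Ioo (0:ℝ) r₀, HasDerivAt ψ (ψ' s) s)
    (hKL : ∀ v : EuclideanSpace ℝ (Fin m), 0 < L v → L v < r₀ →
      1 ≤ ψ' (L v) * ‖gradient L v‖)
    (σF : ℝ) (hσF : 0 < σF)
    (σ₀ : ℝ) (hσ₀ : σ₀ = sigmaMin (fderiv ℝ g θ₀)) (hσ₀pos : 0 < σ₀)
    (R : ℝ) (hRpos : 0 < R)
    (hinj : ∀ q ∈ Metric.closedBall θ₀ R,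
      gradient L (F (g q)) ∈ LinearMap.range (fderiv ℝ F (g q) : EuclideanSpace ℝ (Fin n) →ₗ[ℝ] EuclideanSpace ℝ (Fin m)) ∧
      ∀ z ∈ LinearMap.range (fderiv ℝ F (g q) : EuclideanSpace ℝ (Fin n) →ₗ[ℝ] EuclideanSpace ℝ (Fin m)),
        σF * ‖z‖ ≤ ‖ContinuousLinearMap.adjoint (fderiv ℝ F (g q)) z‖)
    (hLip : ∀ a ∈ Metric.closedBall θ₀ R, ∀ b ∈ Metric.closedBall θ₀ R,
      ‖fderiv ℝ g a - fderiv ℝ g b‖ ≤ σ₀ / (2 * R) * ‖a - b‖)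
    (R' : ℝ) (hRdef : R' = 2 / (σF * σ₀) * ψ (L (F (g θ₀)))) (hRR : R' < R) :
    ∀ t ≥ (0:ℝ), θ t ∈ Metric.closedBall θ₀ R' ∧
      σ₀ / 2 ≤ sigmaMin (fderiv ℝ g (θ t)) := by
  classical
  set f : EuclideanSpace ℝ (Fin p) → ℝ := fun q => L (F (g q)) with hfdef
  set c : ℝ := 2 / (σF * σ₀) with hcdef
  have hcpos : 0 < c := by positivity
  have hLd : Differentiable ℝ L := hL.differentiable one_ne_zero
  have hFd : Differentiable ℝ F := hF.differentiable one_ne_zero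
  have hgd : Differentiable ℝ g := hg.differentiable one_ne_zero
  have hfd : Differentiable ℝ f := fun q => by
    have : DifferentiableAt ℝ (L ∘ F ∘ g) q :=
      (hLd (F (g q))).comp q ((hFd (g q)).comp q (hgd q))
    exact this
  -- gradient chain rule
  have hgradf : ∀ q, gradient f q =
      ContinuousLinearMap.adjoint (fderiv ℝ g q)
        (ContinuousLinearMap.adjoint (fderiv ℝ F (g q)) (gradient L (F (g q)))) := by
    intro q
    have h1 : gradient f q = ContinuousLinearMap.adjoint (fderiv ℝ g q)
        (gradient (fun u => L (F u)) (g q)) :=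
      gradient_comp_eq' (fun u => L (F u)) g q
        ((hLd (F (g q))).comp (g q) (hFd (g q))) (hgd q)
    have h2 : gradient (fun u => L (F u)) (g q)
        = ContinuousLinearMap.adjoint (fderiv ℝ F (g q)) (gradient L (F (g q))) :=
      gradient_comp_eq' L F (g q) (hLd (F (g q))) (hFd (g q))
    rw [h1, h2]
  -- sigma_min bounds
  have hunit : ∃ w : EuclideanSpace ℝ (Fin n), ‖w‖ = 1 :=
    ⟨EuclideanSpace.single ⟨0, hn⟩ (1:ℝ), by simp⟩
  have hne : Nonempty {w : EuclideanSpace ℝ (Fin n) // ‖w‖ = 1} := ⟨⟨hunit.choose, hunit.choose_spec⟩⟩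
  have hbdd : ∀ A : EuclideanSpace ℝ (Fin p) →L[ℝ] EuclideanSpace ℝ (Fin n),
      BddBelow (Set.range fun w : {w : EuclideanSpace ℝ (Fin n) // ‖w‖ = 1} =>
        ‖ContinuousLinearMap.adjoint A w.1‖) := by
    intro A
    refine ⟨0, fun x hx => ?_⟩
    obtain ⟨i, hi⟩ := hx
    rw [← hi]
    exact norm_nonneg _
  have hσ₀le : ∀ w : EuclideanSpace ℝ (Fin n),
      σ₀ * ‖w‖ ≤ ‖ContinuousLinearMap.adjoint (fderiv ℝ g θ₀) w‖ := by
    intro w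
    rcases eq_or_ne w 0 with rfl | hw
    · simp
    · have hwpos : 0 < ‖w‖ := norm_pos_iff.mpr hw
      have hu1 : ‖(‖w‖⁻¹ • w : EuclideanSpace ℝ (Fin n))‖ = 1 := by
        rw [norm_smul, norm_inv, norm_norm, inv_mul_cancel₀ hwpos.ne']
      have h1 : σ₀ ≤ ‖ContinuousLinearMap.adjoint (fderiv ℝ g θ₀) (‖w‖⁻¹ • w)‖ := by
        rw [hσ₀]
        exact ciInf_le (hbdd _) (⟨‖w‖⁻¹ • w, hu1⟩ : {w : EuclideanSpace ℝ (Fin n) // ‖w‖ = 1})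
      rw [_root_.map_smul, norm_smul, norm_inv, norm_norm] at h1
      calc σ₀ * ‖w‖ ≤ ‖w‖⁻¹ * ‖ContinuousLinearMap.adjoint (fderiv ℝ g θ₀) w‖ * ‖w‖ := by
            nlinarith
        _ = ‖ContinuousLinearMap.adjoint (fderiv ℝ g θ₀) w‖ := by
            field_simp
  have hσhalf : ∀ q ∈ Metric.closedBall θ₀ R, ∀ w : EuclideanSpace ℝ (Fin n),
      σ₀ / 2 * ‖w‖ ≤ ‖ContinuousLinearMap.adjoint (fderiv ℝ g q) w‖ := by
    intro q hq w
    have hqR : ‖q - θ₀‖ ≤ R := by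
      rw [← dist_eq_norm]
      exact Metric.mem_closedBall.mp hq
    have hdiff : ‖fderiv ℝ g q - fderiv ℝ g θ₀‖ ≤ σ₀ / 2 := by
      have h0 := hLip q hq θ₀ (Metric.mem_closedBall_self hRpos.le)
      have h1 : σ₀ / (2 * R) * ‖q - θ₀‖ ≤ σ₀ / (2 * R) * R := by
        apply mul_le_mul_of_nonneg_left hqR
        positivity
      have h2 : σ₀ / (2 * R) * R = σ₀ / 2 := by
        field_simp
      linarith
    have h1 : ‖ContinuousLinearMap.adjoint (fderiv ℝ g q) w
        - ContinuousLinearMap.adjoint (fderiv ℝ g θ₀) w‖ ≤ σ₀ / 2 * ‖w‖ := by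
      refine le_trans (adjoint_sub_norm _ _ _) ?_
      exact mul_le_mul_of_nonneg_right hdiff (norm_nonneg _)
    have h2 := hσ₀le w
    have h3 := norm_sub_norm_le (ContinuousLinearMap.adjoint (fderiv ℝ g θ₀) w)
      (ContinuousLinearMap.adjoint (fderiv ℝ g q) w)
    rw [norm_sub_rev] at h3
    linarith
  have hsmin : ∀ q ∈ Metric.closedBall θ₀ R, σ₀ / 2 ≤ sigmaMin (fderiv ℝ g q) := by
    intro q hq
    refine le_ciInf fun w => ?_
    have := hσhalf q hq w.1
    rw [w.2, mul_one] at this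
    exact this
  -- gradient lower bound in the ball
  have hgradlow : ∀ q ∈ Metric.closedBall θ₀ R,
      σF * (σ₀ / 2) * ‖gradient L (F (g q))‖ ≤ ‖gradient f q‖ := by
    intro q hq
    rw [hgradf q]
    obtain ⟨hmem, hrng⟩ := hinj q hq
    calc σF * (σ₀ / 2) * ‖gradient L (F (g q))‖
        = σ₀ / 2 * (σF * ‖gradient L (F (g q))‖) := by ring
      _ ≤ σ₀ / 2 * ‖ContinuousLinearMap.adjoint (fderiv ℝ F (g q)) (gradient L (F (g q)))‖ := by
          exact mul_le_mul_of_nonneg_left (hrng _ hmem) (by positivity)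
      _ ≤ _ := by
          have := hσhalf q hq (ContinuousLinearMap.adjoint (fderiv ℝ F (g q)) (gradient L (F (g q))))
          linarith
  -- derivative of f ∘ θ
  have hinner : ∀ q v, (fderiv ℝ f q) v = inner ℝ (gradient f q) v := by
    intro q v
    rw [gradient]
    rw [InnerProductSpace.toDual_symm_apply]
  have hfθd : ∀ t ≥ (0:ℝ), HasDerivAt (fun s => f (θ s)) (-‖gradient f (θ t)‖ ^ 2) t := by
    intro t ht
    have h1 := ((hfd (θ t)).hasFDerivAt).comp_hasDerivAt t (hθd t ht)
    have h2 : (fderiv ℝ f (θ t)) (θ' t) = -‖gradient f (θ t)‖ ^ 2 := by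
      rw [hflow t ht, hinner, inner_neg_right, real_inner_self_eq_norm_sq]
    rw [h2] at h1
    exact h1
  have hθcontOn : ∀ t ≥ (0:ℝ), ContinuousAt θ t := fun t ht => (hθd t ht).continuousAt
  have hfθanti : AntitoneOn (fun s => f (θ s)) (Set.Ici 0) := by
    apply antitoneOn_of_deriv_nonpos (convex_Ici 0)
    · exact fun t ht => ((hfθd t ht).continuousAt).continuousWithinAt
    · rw [interior_Ici]
      exact fun t ht => ((hfθd t (le_of_lt ht)).differentiableAt).differentiableWithinAt
    · rw [interior_Ici]
      intro t ht
      rw [(hfθd t (le_of_lt ht)).deriv]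
      simp [sq_nonneg]
  have hr₀pos : 0 < r₀ := lt_of_le_of_lt (hLnonneg _) hr₀
  have hy_mem : ∀ t ≥ (0:ℝ), f (θ t) ∈ Set.Ico 0 r₀ := by
    intro t ht
    refine ⟨hLnonneg _, lt_of_le_of_lt ?_ hr₀⟩
    exact hfθanti (Set.self_mem_Ici) ht ht
  have hψnonneg : ∀ s ∈ Set.Ico (0:ℝ) r₀, 0 ≤ ψ s := by
    intro s hs
    rcases eq_or_lt_of_le hs.1 with h | h
    · rw [← h, hψ0]
    · rw [← hψ0]
      exact le_of_lt (hψmono ⟨le_rfl, hr₀pos⟩ hs h)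
  -- displacement bounded by arclength
  have hθint : ∀ a b : ℝ, 0 ≤ a → a ≤ b → IntervalIntegrable θ' volume a b := by
    intro a b ha hab
    apply ContinuousOn.intervalIntegrable
    apply hθcont.mono
    rw [Set.uIcc_of_le hab]
    exact fun x hx => le_trans ha hx.1
  have hdisp : ∀ a b : ℝ, 0 ≤ a → a ≤ b → ‖θ b - θ a‖ ≤ ∫ s in a..b, ‖θ' s‖ := by
    intro a b ha hab
    have h2 : ∫ s in a..b, θ' s = θ b - θ a := by
      apply intervalIntegral.integral_eq_sub_of_hasDerivAt
      · intro s hs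
        rw [Set.uIcc_of_le hab] at hs
        exact hθd s (le_trans ha hs.1)
      · exact hθint a b ha hab
    rw [← h2]
    exact intervalIntegral.norm_integral_le_integral_norm hab
  -- the Lyapunov lemma
  have lem1 : ∀ τ ≥ (0:ℝ), (∀ s ∈ Set.Icc 0 τ, θ s ∈ Metric.closedBall θ₀ R) →
      (∀ s ∈ Set.Ioo 0 τ, 0 < f (θ s)) →
      ∀ t ∈ Set.Icc 0 τ, ‖θ t - θ 0‖ + c * ψ (f (θ t)) ≤ c * ψ (f (θ 0)) := by
    intro τ hτ hball hpos
    have hder : ∀ t ∈ Set.Ioo 0 τ, HasDerivAt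
        (fun u => (∫ s in (0:ℝ)..u, ‖θ' s‖) + c * ψ (f (θ u)))
        (‖gradient f (θ t)‖ + c * (ψ' (f (θ t)) * (-‖gradient f (θ t)‖ ^ 2))) t := by
      intro t htm
      have ht0 : 0 < t := htm.1
      have hI : HasDerivAt (fun u => ∫ s in (0:ℝ)..u, ‖θ' s‖) ‖θ' t‖ t := by
        apply intervalIntegral.integral_hasDerivAt_right
        · exact (hθint 0 t le_rfl ht0.le).norm
        · refine ContinuousAt.stronglyMeasurableAtFilter (isOpen_Ioi (a := (0:ℝ))) ?_ t ht0
          intro x hx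
          exact (hθcont.norm).continuousAt (Ici_mem_nhds hx)
        · exact (hθcont.norm).continuousAt (Ici_mem_nhds ht0)
      have hθ't : ‖θ' t‖ = ‖gradient f (θ t)‖ := by rw [hflow t ht0.le, norm_neg]
      rw [hθ't] at hI
      have hψD : HasDerivAt (fun u => ψ (f (θ u)))
          (ψ' (f (θ t)) * (-‖gradient f (θ t)‖ ^ 2)) t := by
        have hmem : f (θ t) ∈ Set.Ioo 0 r₀ := ⟨hpos t htm, (hy_mem t ht0.le).2⟩
        exact (hψd _ hmem).comp t (hfθd t ht0.le)
      exact hI.add (hψD.const_mul c)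
    have hW : AntitoneOn (fun u => (∫ s in (0:ℝ)..u, ‖θ' s‖) + c * ψ (f (θ u)))
        (Set.Icc 0 τ) := by
      apply antitoneOn_of_deriv_nonpos (convex_Icc 0 τ)
      · apply ContinuousOn.add
        · have hInt : MeasureTheory.IntegrableOn (fun s => ‖θ' s‖) (Set.uIcc 0 τ) volume := by
            rw [Set.uIcc_of_le hτ]
            apply ContinuousOn.integrableOn_Icc
            exact (hθcont.norm).mono (fun x hx => hx.1)
          have := intervalIntegral.continuousOn_primitive_interval hInt
          rwa [Set.uIcc_of_le hτ] at this
        · apply ContinuousOn.mul continuousOn_const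
          apply hψcont.comp
          · intro s hs
            exact ((hfθd s hs.1).continuousAt).continuousWithinAt
          · intro s hs
            exact hy_mem s hs.1
      · rw [interior_Icc]
        intro t htm
        exact ((hder t htm).differentiableAt).differentiableWithinAt
      · rw [interior_Icc]
        intro t htm
        rw [(hder t htm).deriv]
        have hb : θ t ∈ Metric.closedBall θ₀ R := hball t ⟨htm.1.le, htm.2.le⟩
        have hmem : f (θ t) ∈ Set.Ioo 0 r₀ := ⟨hpos t htm, (hy_mem t htm.1.le).2⟩
        have hKLt : 1 ≤ ψ' (f (θ t)) * ‖gradient L (F (g (θ t)))‖ :=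
          hKL (F (g (θ t))) hmem.1 hmem.2
        have hlow := hgradlow (θ t) hb
        set G := ‖gradient f (θ t)‖ with hGdef
        set N := ‖gradient L (F (g (θ t)))‖ with hNdef
        set P := ψ' (f (θ t)) with hPdef
        have hG : 0 ≤ G := norm_nonneg _
        have hN : 0 ≤ N := norm_nonneg _
        have hP : 0 ≤ P := by nlinarith
        have hc : c * (σF * (σ₀ / 2)) = 1 := by
          rw [hcdef]
          field_simp
        have h2 : N ≤ c * G := by nlinarith
        have h1 : G ≤ P * N * G := by nlinarith
        nlinarith [mul_le_mul_of_nonneg_left h2 (mul_nonneg hP hG)]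
    intro t htmem
    have h0 : (0:ℝ) ∈ Set.Icc 0 τ := ⟨le_rfl, hτ⟩
    have hWt := hW h0 htmem htmem.1
    simp only [intervalIntegral.integral_same] at hWt
    have hd := hdisp 0 t le_rfl htmem.1
    linarith
  -- KEY: whenever trajectory stays in ball R up to T, get strong bound
  have key : ∀ T ≥ (0:ℝ), (∀ s ∈ Set.Icc 0 T, θ s ∈ Metric.closedBall θ₀ R) →
      ∀ t ∈ Set.Icc 0 T, ‖θ t - θ 0‖ + c * ψ (f (θ t)) ≤ c * ψ (f (θ 0)) := by
    intro T hT hball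
    by_cases hZ : ∀ s ∈ Set.Icc (0:ℝ) T, 0 < f (θ s)
    · exact lem1 T hT hball (fun s hs => hZ s ⟨hs.1.le, hs.2.le⟩)
    · push_neg at hZ
      obtain ⟨s₀, hs₀mem, hs₀⟩ := hZ
      set Z := {s : ℝ | s ∈ Set.Icc 0 T ∧ f (θ s) = 0} with hZdef
      have hZne : Z.Nonempty := ⟨s₀, hs₀mem, le_antisymm hs₀ (hLnonneg _)⟩
      have hZclosed : IsClosed Z := by
        have hcont : ContinuousOn (fun s => f (θ s)) (Set.Icc 0 T) :=
          fun s hs => ((hfθd s hs.1).continuousAt).continuousWithinAt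
        have h := hcont.preimage_isClosed_of_isClosed isClosed_Icc (isClosed_singleton (x := (0:ℝ)))
        have heq : Z = Set.Icc 0 T ∩ (fun s => f (θ s)) ⁻¹' {0} := by
          ext u
          simp [hZdef]
        rw [heq]
        exact h
      have hbddZ : BddBelow Z := ⟨0, fun s hs => hs.1.1⟩
      set t₁ := sInf Z with ht₁def
      have ht₁mem : t₁ ∈ Z := hZclosed.csInf_mem hZne hbddZ
      have ht₁Icc : t₁ ∈ Set.Icc 0 T := ht₁mem.1
      have ht₁f : f (θ t₁) = 0 := ht₁mem.2
      have hposbefore : ∀ s ∈ Set.Ioo 0 t₁, 0 < f (θ s) := by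
        intro s hs
        rcases (hLnonneg (F (g (θ s)))).lt_or_eq with h | h
        · exact h
        · exfalso
          have hsZ : s ∈ Z := ⟨⟨hs.1.le, hs.2.le.trans ht₁Icc.2⟩, h.symm⟩
          exact absurd (csInf_le hbddZ hsZ) (not_le.mpr hs.2)
      have hb1 := lem1 t₁ ht₁Icc.1 (fun s hs => hball s ⟨hs.1, hs.2.trans ht₁Icc.2⟩) hposbefore
      have hzero : ∀ s ∈ Set.Icc t₁ T, f (θ s) = 0 := by
        intro s hs
        have h1 : f (θ s) ≤ f (θ t₁) :=
          hfθanti ht₁Icc.1 (ht₁Icc.1.trans hs.1) hs.1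
        rw [ht₁f] at h1
        exact le_antisymm h1 (hLnonneg _)
      have hgrad0 : ∀ s ∈ Set.Icc t₁ T, θ' s = 0 := by
        intro s hs
        have hmin : IsLocalMin f (θ s) := by
          apply Filter.Eventually.of_forall
          intro x
          rw [hzero s hs]
          exact hLnonneg _
        have hfz : fderiv ℝ f (θ s) = 0 :=
          hmin.hasFDerivAt_eq_zero ((hfd (θ s)).hasFDerivAt)
        have hgr : gradient f (θ s) = 0 := by
          unfold gradient
          rw [hfz, map_zero]
        rw [hflow s (ht₁Icc.1.trans hs.1), hgr, neg_zero]
      have hconst : ∀ s ∈ Set.Icc t₁ T, θ s = θ t₁ := by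
        intro s hs
        have h2 : ∫ u in t₁..s, ‖θ' u‖ = 0 := by
          have heq : Set.EqOn (fun u => ‖θ' u‖) (fun _ => (0:ℝ)) (Set.uIcc t₁ s) := by
            intro u hu
            rw [Set.uIcc_of_le hs.1] at hu
            simp [hgrad0 u ⟨hu.1, hu.2.trans hs.2⟩]
          rw [intervalIntegral.integral_congr heq]
          simp
        have hd := hdisp t₁ s ht₁Icc.1 hs.1
        rw [h2] at hd
        have hz : ‖θ s - θ t₁‖ = 0 := le_antisymm hd (norm_nonneg _)
        rw [norm_eq_zero, sub_eq_zero] at hz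
        exact hz
      intro t htmem
      by_cases hle : t ≤ t₁
      · exact hb1 t ⟨htmem.1, hle⟩
      · push_neg at hle
        have hts : t ∈ Set.Icc t₁ T := ⟨hle.le, htmem.2⟩
        have h1 := hb1 t₁ ⟨ht₁Icc.1, le_rfl⟩
        rw [hconst t hts]
        exact h1
  -- trajectory never leaves ball R
  have hinR : ∀ t ≥ (0:ℝ), θ t ∈ Metric.closedBall θ₀ R := by
    by_contra hcon
    push_neg at hcon
    obtain ⟨t₂, ht₂, hout⟩ := hcon
    set B := {t : ℝ | 0 ≤ t ∧ R < dist (θ t) θ₀} with hBdef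
    have hBne : B.Nonempty := ⟨t₂, ht₂, by rwa [Metric.mem_closedBall, not_le] at hout⟩
    have hBbdd : BddBelow B := ⟨0, fun b hb => hb.1⟩
    set T := sInf B with hTdef
    have hT0 : 0 ≤ T := le_csInf hBne (fun b hb => hb.1)
    have hTlb : ∀ b ∈ B, T ≤ b := fun b hb => csInf_le hBbdd hb
    have hballT : ∀ s ∈ Set.Icc (0:ℝ) T, θ s ∈ Metric.closedBall θ₀ R := by
      intro s hs
      rcases lt_or_eq_of_le hs.2 with h | h
      · by_contra hns
        have hsB : s ∈ B := ⟨hs.1, by rwa [Metric.mem_closedBall, not_le] at hns⟩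
        exact absurd (hTlb s hsB) (not_le.mpr h)
      · rcases eq_or_lt_of_le hs.1 with h0 | h0
        · rw [← h0, hθ0]
          simp [hRpos.le]
        · rw [h]
          have hct : ContinuousAt θ T := hθcontOn T hT0
          have htend : Filter.Tendsto (fun u => dist (θ u) θ₀) (𝓝[<] T)
              (𝓝 (dist (θ T) θ₀)) :=
            ((hct.tendsto.mono_left nhdsWithin_le_nhds).dist tendsto_const_nhds)
          apply Metric.mem_closedBall.mpr
          refine le_of_tendsto htend ?_
          have hT0' : 0 < T := h ▸ h0
          have hmemIoo : Set.Ioo 0 T ∈ 𝓝[<] T := Ioo_mem_nhdsLT_of_mem ⟨hT0', le_rfl⟩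
          filter_upwards [hmemIoo] with u hu
          by_contra hnu
          push_neg at hnu
          have huB : u ∈ B := ⟨hu.1.le, hnu⟩
          exact absurd (hTlb u huB) (not_le.mpr hu.2)
    have hkey := key T hT0 hballT T ⟨hT0, le_rfl⟩
    have hψT : 0 ≤ ψ (f (θ T)) := hψnonneg _ (hy_mem T hT0)
    have hcψ : 0 ≤ c * ψ (f (θ T)) := mul_nonneg hcpos.le hψT
    have hR'eq : R' = c * ψ (f (θ 0)) := by rw [hRdef, hθ0]
    have hdistT : dist (θ T) θ₀ ≤ R' := by
      rw [dist_eq_norm, ← hθ0]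
      linarith
    have hct : ContinuousAt (fun u => dist (θ u) θ₀) T :=
      (hθcontOn T hT0).dist continuousAt_const
    have hev : ∀ᶠ u in 𝓝 T, dist (θ u) θ₀ < R :=
      hct.eventually_lt_const (lt_of_le_of_lt hdistT hRR)
    obtain ⟨ε, hε, hball'⟩ := Metric.eventually_nhds_iff.mp hev
    have hlow : T + ε/2 ≤ T := by
      rw [hTdef]
      apply le_csInf hBne
      intro b hb
      by_contra hnb
      push_neg at hnb
      have hbT : T ≤ b := hTlb b hb
      have hd : dist b T < ε := by
        rw [Real.dist_eq, abs_of_nonneg (by linarith)]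
        linarith
      exact absurd (hball' hd) (not_lt.mpr hb.2.le)
    linarith
  -- conclusion
  intro t ht
  have hb := key t ht (fun s hs => hinR s hs.1) t ⟨ht, le_rfl⟩
  have hψt : 0 ≤ ψ (f (θ t)) := hψnonneg _ (hy_mem t ht)
  have hR'eq : R' = c * ψ (f (θ 0)) := by
    rw [hRdef, hθ0]
  constructor
  · rw [Metric.mem_closedBall, dist_eq_norm, ← hθ0]
    nlinarith
  · exact hsmin (θ t) (hinR t ht)
end

section
/- Assume additionally L(y(0)) > 0 and let Ψ : (0, r₀) → ℝ be differentiable with Ψ'(s) = −ψ'(s)² for all s ∈ (0, r₀) (so Ψ is strictly decreasing). Then for every t ≥ 0 with L(y(t)) > 0 one has Ψ(L(y(t))) ≥ (σ_F²·σ₀²/4)·t + Ψ(L(y(0))); equivalently, the loss decays at the rate L(y(t)) ≤ Ψ⁻¹((σ_F²·σ₀²/4)·t + Ψ(L(y(0)))). -/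
open Filter MeasureTheory ProbabilityTheory
open scoped Topology NNReal
open scoped RealInnerProductSpace

set_option maxHeartbeats 1000000

lemma inner_gradient_eq {E : Type*} [NormedAddCommGroup E] [InnerProductSpace ℝ E]
    [CompleteSpace E] (f : E → ℝ) (x v : E) :
    ⟪gradient f x, v⟫ = fderiv ℝ f x v := by
  rw [gradient]; exact InnerProductSpace.toDual_symm_apply

lemma sigmaMin_le {E F : Type*} [NormedAddCommGroup E] [InnerProductSpace ℝ E]
    [CompleteSpace E] [NormedAddCommGroup F] [InnerProductSpace ℝ F] [CompleteSpace F]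
    (A : E →L[ℝ] F) (w : F) : sigmaMin A * ‖w‖ ≤ ‖ContinuousLinearMap.adjoint A w‖ := by
  rcases eq_or_ne w 0 with rfl | hw
  · simp
  · have hnw : ‖w‖ ≠ 0 := norm_ne_zero_iff.2 hw
    have hw1 : ‖(‖w‖⁻¹ • w)‖ = 1 := by
      rw [norm_smul, norm_inv, norm_norm, inv_mul_cancel₀ hnw]
    have hbdd : BddBelow (Set.range fun w : {w : F // ‖w‖ = 1} =>
        ‖ContinuousLinearMap.adjoint A w.1‖) := by
      refine ⟨0, fun x hx => ?_⟩
      rcases hx with ⟨i, rfl⟩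
      exact norm_nonneg _
    have h1 : sigmaMin A ≤ ‖ContinuousLinearMap.adjoint A (‖w‖⁻¹ • w)‖ :=
      ciInf_le hbdd (⟨_, hw1⟩ : {w : F // ‖w‖ = 1})
    have h2 : ‖ContinuousLinearMap.adjoint A (‖w‖⁻¹ • w)‖ = ‖w‖⁻¹ * ‖ContinuousLinearMap.adjoint A w‖ := by
      rw [_root_.map_smul, norm_smul, norm_inv, norm_norm]
    have hpos : (0:ℝ) < ‖w‖ := (norm_nonneg w).lt_of_ne' hnw
    rw [h2] at h1
    calc sigmaMin A * ‖w‖ ≤ ‖w‖⁻¹ * ‖ContinuousLinearMap.adjoint A w‖ * ‖w‖ :=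
          mul_le_mul_of_nonneg_right h1 (norm_nonneg _)
      _ = ‖ContinuousLinearMap.adjoint A w‖ := by field_simp

theorem stmt4
    {n m p : ℕ} (hn : 0 < n) (hm : 0 < m) (hp : 0 < p)
    (L : EuclideanSpace ℝ (Fin m) → ℝ)
    (F : EuclideanSpace ℝ (Fin n) → EuclideanSpace ℝ (Fin m))
    (g : EuclideanSpace ℝ (Fin p) → EuclideanSpace ℝ (Fin n))
    (hL : ContDiff ℝ 1 L)
    (hLnonneg : ∀ v, 0 ≤ L v) (hLmin : ∃ v, L v = 0)
    (hLgrad : ∀ s : Set (EuclideanSpace ℝ (Fin m)), Bornology.IsBounded s →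
      ∃ K : ℝ≥0, LipschitzOnWith K (fun v => gradient L v) s)
    (hF : ContDiff ℝ 1 F)
    (hJF : ∀ s : Set (EuclideanSpace ℝ (Fin n)), Bornology.IsBounded s →
      ∃ K : ℝ≥0, LipschitzOnWith K (fun x => fderiv ℝ F x) s)
    (hg : ContDiff ℝ 1 g)
    (hJg : ∀ s : Set (EuclideanSpace ℝ (Fin p)), Bornology.IsBounded s →
      ∃ K : ℝ≥0, LipschitzOnWith K (fun q => fderiv ℝ g q) s)
    (θ θ' : ℝ → EuclideanSpace ℝ (Fin p)) (θ₀ : EuclideanSpace ℝ (Fin p))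
    (hθ0 : θ 0 = θ₀)
    (hθd : ∀ t ≥ (0:ℝ), HasDerivAt θ (θ' t) t)
    (hθcont : ContinuousOn θ' (Set.Ici 0))
    (hflow : ∀ t ≥ (0:ℝ), θ' t = -gradient (fun q => L (F (g q))) (θ t))
    (r₀ : ℝ) (hr₀ : L (F (g (θ 0))) < r₀)
    (ψ ψ' : ℝ → ℝ) (hψ0 : ψ 0 = 0)
    (hψcont : ContinuousOn ψ (Set.Ico 0 r₀))
    (hψmono : StrictMonoOn ψ (Set.Ico 0 r₀))
    (hψd : ∀ s ∈ Set.Ioo (0:ℝ) r₀, HasDerivAt ψ (ψ' s) s)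
    (hKL : ∀ v : EuclideanSpace ℝ (Fin m), 0 < L v → L v < r₀ →
      1 ≤ ψ' (L v) * ‖gradient L v‖)
    (σF : ℝ) (hσF : 0 < σF)
    (σ₀ : ℝ) (hσ₀ : σ₀ = sigmaMin (fderiv ℝ g θ₀)) (hσ₀pos : 0 < σ₀)
    (R : ℝ) (hRpos : 0 < R)
    (hinj : ∀ q ∈ Metric.closedBall θ₀ R,
      gradient L (F (g q)) ∈ LinearMap.range (fderiv ℝ F (g q) : EuclideanSpace ℝ (Fin n) →ₗ[ℝ] EuclideanSpace ℝ (Fin m)) ∧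
      ∀ z ∈ LinearMap.range (fderiv ℝ F (g q) : EuclideanSpace ℝ (Fin n) →ₗ[ℝ] EuclideanSpace ℝ (Fin m)),
        σF * ‖z‖ ≤ ‖ContinuousLinearMap.adjoint (fderiv ℝ F (g q)) z‖)
    (hLip : ∀ a ∈ Metric.closedBall θ₀ R, ∀ b ∈ Metric.closedBall θ₀ R,
      ‖fderiv ℝ g a - fderiv ℝ g b‖ ≤ σ₀ / (2 * R) * ‖a - b‖)
    (R' : ℝ) (hRdef : R' = 2 / (σF * σ₀) * ψ (L (F (g θ₀)))) (hRR : R' < R)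
    (hL0pos : 0 < L (F (g (θ 0))))
    (Ψ : ℝ → ℝ) (hΨ : ∀ s ∈ Set.Ioo (0:ℝ) r₀, HasDerivAt Ψ (-(ψ' s) ^ 2) s) :
    ∀ t ≥ (0:ℝ), 0 < L (F (g (θ t))) →
      σF ^ 2 * σ₀ ^ 2 / 4 * t + Ψ (L (F (g (θ 0)))) ≤ Ψ (L (F (g (θ t)))) := by
  intro t ht htpos
  -- basic differentiability
  have hdL : Differentiable ℝ L := hL.differentiable one_ne_zero
  have hdF : Differentiable ℝ F := hF.differentiable one_ne_zero
  have hdg : Differentiable ℝ g := hg.differentiable one_ne_zero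
  have hdf : Differentiable ℝ (fun q => L (F (g q))) := fun q =>
    DifferentiableAt.comp q (hdL (F (g q))) (DifferentiableAt.comp q (hdF (g q)) (hdg q))
  -- gradient chain rule
  have hgradf : ∀ q, gradient (fun q => L (F (g q))) q =
      ContinuousLinearMap.adjoint (fderiv ℝ g q)
        (ContinuousLinearMap.adjoint (fderiv ℝ F (g q)) (gradient L (F (g q)))) := by
    intro q
    apply ext_inner_right ℝ
    intro v
    rw [inner_gradient_eq, ContinuousLinearMap.adjoint_inner_left,
        ContinuousLinearMap.adjoint_inner_left, inner_gradient_eq]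
    have hcomp : fderiv ℝ (fun q => L (F (g q))) q =
        (fderiv ℝ L (F (g q))).comp ((fderiv ℝ F (g q)).comp (fderiv ℝ g q)) := by
      have h1 : fderiv ℝ (F ∘ g) q = (fderiv ℝ F (g q)).comp (fderiv ℝ g q) :=
        fderiv_comp q (hdF (g q)) (hdg q)
      have h2 : fderiv ℝ (L ∘ (F ∘ g)) q =
          (fderiv ℝ L ((F ∘ g) q)).comp (fderiv ℝ (F ∘ g) q) :=
        fderiv_comp q (hdL _) ((hdF (g q)).comp q (hdg q))
      rw [show (fun q => L (F (g q))) = L ∘ (F ∘ g) from rfl, h2, h1]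
      rfl
    rw [hcomp]
    rfl
  -- derivative of the loss along the flow
  have hld : ∀ u, 0 ≤ u → HasDerivAt (fun u => L (F (g (θ u))))
      (-‖gradient (fun q => L (F (g q))) (θ u)‖ ^ 2) u := by
    intro u hu
    have h1 : HasDerivAt (fun u => L (F (g (θ u))))
        (fderiv ℝ (fun q => L (F (g q))) (θ u) (θ' u)) u :=
      (hdf (θ u)).hasFDerivAt.comp_hasDerivAt u (hθd u hu)
    convert h1 using 1
    rw [← inner_gradient_eq, hflow u hu, inner_neg_right, real_inner_self_eq_norm_sq]
  -- adjoint lower bound at θ₀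
  have hσ₀w : ∀ w, σ₀ * ‖w‖ ≤ ‖ContinuousLinearMap.adjoint (fderiv ℝ g θ₀) w‖ := by
    intro w; rw [hσ₀]; exact sigmaMin_le _ w
  -- adjoint lower bound on the ball
  have hballw : ∀ q, q ∈ Metric.closedBall θ₀ R →
      ∀ w, σ₀ / 2 * ‖w‖ ≤ ‖ContinuousLinearMap.adjoint (fderiv ℝ g q) w‖ := by
    intro q hq w
    have hdist : ‖q - θ₀‖ ≤ R := by
      rw [← dist_eq_norm]; exact Metric.mem_closedBall.1 hq
    have hdiff : ‖ContinuousLinearMap.adjoint (fderiv ℝ g q) w -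
        ContinuousLinearMap.adjoint (fderiv ℝ g θ₀) w‖ ≤ σ₀ / 2 * ‖w‖ := by
      have e1 : ContinuousLinearMap.adjoint (fderiv ℝ g q) w -
          ContinuousLinearMap.adjoint (fderiv ℝ g θ₀) w =
          ContinuousLinearMap.adjoint (fderiv ℝ g q - fderiv ℝ g θ₀) w := by
        rw [map_sub]; rfl
      rw [e1]
      have hRhalf : σ₀ / (2 * R) * ‖q - θ₀‖ ≤ σ₀ / 2 := by
        have h1 : σ₀ / (2 * R) * ‖q - θ₀‖ ≤ σ₀ / (2 * R) * R :=
          mul_le_mul_of_nonneg_left hdist (by positivity)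
        have h2 : σ₀ / (2 * R) * R = σ₀ / 2 := by field_simp
        linarith
      calc ‖ContinuousLinearMap.adjoint (fderiv ℝ g q - fderiv ℝ g θ₀) w‖
          ≤ ‖ContinuousLinearMap.adjoint (fderiv ℝ g q - fderiv ℝ g θ₀)‖ * ‖w‖ :=
            ContinuousLinearMap.le_opNorm _ w
        _ = ‖fderiv ℝ g q - fderiv ℝ g θ₀‖ * ‖w‖ := by
            rw [LinearIsometryEquiv.norm_map]
        _ ≤ (σ₀ / (2 * R) * ‖q - θ₀‖) * ‖w‖ :=
            mul_le_mul_of_nonneg_right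
              (hLip q hq θ₀ (Metric.mem_closedBall_self hRpos.le)) (norm_nonneg w)
        _ ≤ σ₀ / 2 * ‖w‖ := mul_le_mul_of_nonneg_right hRhalf (norm_nonneg w)
    have h0 := hσ₀w w
    have htri := abs_norm_sub_norm_le (ContinuousLinearMap.adjoint (fderiv ℝ g q) w)
        (ContinuousLinearMap.adjoint (fderiv ℝ g θ₀) w)
    rw [abs_le] at htri
    linarith [htri.1]
  -- gradient lower bound on the ball
  have hgradlow : ∀ q, q ∈ Metric.closedBall θ₀ R →
      σF * σ₀ / 2 * ‖gradient L (F (g q))‖ ≤ ‖gradient (fun q => L (F (g q))) q‖ := by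
    intro q hq
    obtain ⟨hmem, hFinj⟩ := hinj q hq
    rw [hgradf q]
    calc σF * σ₀ / 2 * ‖gradient L (F (g q))‖
        = σ₀ / 2 * (σF * ‖gradient L (F (g q))‖) := by ring
      _ ≤ σ₀ / 2 * ‖ContinuousLinearMap.adjoint (fderiv ℝ F (g q)) (gradient L (F (g q)))‖ :=
          mul_le_mul_of_nonneg_left (hFinj _ hmem) (by positivity)
      _ ≤ _ := hballw q hq _
  -- positivity of ψ'
  have hψ'pos : ∀ v : EuclideanSpace ℝ (Fin m), 0 < L v → L v < r₀ → 0 < ψ' (L v) := by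
    intro v h1 h2
    have hk := hKL v h1 h2
    by_contra h
    push_neg at h
    nlinarith [norm_nonneg (gradient L v)]
  -- main pointwise inequality on the ball
  have hmain : ∀ q, q ∈ Metric.closedBall θ₀ R → 0 < L (F (g q)) → L (F (g q)) < r₀ →
      σF * σ₀ / 2 ≤ ψ' (L (F (g q))) * ‖gradient (fun q => L (F (g q))) q‖ := by
    intro q hq h1 h2
    have hg1 := hgradlow q hq
    have hk := hKL (F (g q)) h1 h2
    have hψp := hψ'pos (F (g q)) h1 h2
    calc σF * σ₀ / 2 ≤ σF * σ₀ / 2 * (ψ' (L (F (g q))) * ‖gradient L (F (g q))‖) :=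
          le_mul_of_one_le_right (by positivity) hk
      _ = ψ' (L (F (g q))) * (σF * σ₀ / 2 * ‖gradient L (F (g q))‖) := by ring
      _ ≤ ψ' (L (F (g q))) * ‖gradient (fun q => L (F (g q))) q‖ :=
          mul_le_mul_of_nonneg_left hg1 hψp.le
  -- the loss is antitone on [0, t]
  have hcontℓ : ContinuousOn (fun u => L (F (g (θ u)))) (Set.Icc 0 t) := fun u hu =>
    ((hld u hu.1).continuousAt).continuousWithinAt
  have hanti : AntitoneOn (fun u => L (F (g (θ u)))) (Set.Icc 0 t) := by
    apply antitoneOn_of_deriv_nonpos (convex_Icc 0 t) hcontℓ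
    · intro x hx
      rw [interior_Icc] at hx
      exact ((hld x hx.1.le).differentiableAt).differentiableWithinAt
    · intro x hx
      rw [interior_Icc] at hx
      rw [(hld x hx.1.le).deriv]
      simp [sq_nonneg]
  have hrange : ∀ u ∈ Set.Icc (0:ℝ) t, 0 < L (F (g (θ u))) ∧ L (F (g (θ u))) < r₀ := by
    intro u hu
    constructor
    · exact lt_of_lt_of_le htpos (hanti hu (Set.right_mem_Icc.2 ht) hu.2)
    · exact lt_of_le_of_lt (hanti (Set.left_mem_Icc.2 ht) hu hu.1) hr₀
  have hψnn : ∀ u ∈ Set.Icc (0:ℝ) t, 0 ≤ ψ (L (F (g (θ u)))) := by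
    intro u hu
    have h0mem : (0:ℝ) ∈ Set.Ico 0 r₀ := ⟨le_rfl, lt_trans hL0pos hr₀⟩
    have := hψmono h0mem ⟨(hrange u hu).1.le, (hrange u hu).2⟩ (hrange u hu).1
    rw [hψ0] at this
    exact this.le
  -- bootstrap: θ stays in the ball on [0, t]
  set ε : ℝ := (R - R') / (t + 1) with hεdef
  have hεpos : 0 < ε := by
    apply div_pos (by linarith) (by linarith)
  have hRt : R' + ε * (t + 1) = R := by
    rw [hεdef]
    field_simp
    ring
  have hR'0 : R' = 2 / (σF * σ₀) * ψ (L (F (g (θ 0)))) := by rw [hRdef, hθ0]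
  have hfence : ∀ u ∈ Set.Icc (0:ℝ) t, ‖θ u - θ₀‖ ≤
      2 / (σF * σ₀) * (ψ (L (F (g (θ 0)))) - ψ (L (F (g (θ u))))) + ε * (u + 1) := by
    intro u hu
    apply image_norm_le_of_norm_deriv_right_lt_deriv_boundary'
      (f := fun u => θ u - θ₀) (f' := θ') (a := 0) (b := t)
      (B := fun u => 2 / (σF * σ₀) * (ψ (L (F (g (θ 0)))) - ψ (L (F (g (θ u))))) + ε * (u + 1))
      (B' := fun u => 2 / (σF * σ₀) *
        (ψ' (L (F (g (θ u)))) * ‖gradient (fun q => L (F (g q))) (θ u)‖ ^ 2) + ε)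
      ?c1 ?c2 ?c3 ?c4 ?c5 ?c6 hu
    case c1 =>
      intro x hx
      exact ((hθd x hx.1).continuousAt.sub continuousAt_const).continuousWithinAt
    case c2 =>
      intro x hx
      exact (((hθd x hx.1).sub_const θ₀)).hasDerivWithinAt
    case c3 =>
      simp only [hθ0, sub_self, norm_zero, mul_zero, zero_add, mul_one]
      exact hεpos.le
    case c4 =>
      have hψc : ContinuousOn (fun u => ψ (L (F (g (θ u))))) (Set.Icc 0 t) := by
        apply hψcont.comp hcontℓ
        intro u hu
        exact ⟨(hrange u hu).1.le, (hrange u hu).2⟩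
      apply ContinuousOn.add
      · exact continuousOn_const.mul (continuousOn_const.sub hψc)
      · exact continuousOn_const.mul (continuousOn_id.add continuousOn_const)
    case c5 =>
      intro x hx
      have hx' : x ∈ Set.Icc (0:ℝ) t := ⟨hx.1, hx.2.le⟩
      have h1 : HasDerivAt (fun u => ψ (L (F (g (θ u)))))
          (ψ' (L (F (g (θ x)))) * (-‖gradient (fun q => L (F (g q))) (θ x)‖ ^ 2)) x :=
        (hψd _ ⟨(hrange x hx').1, (hrange x hx').2⟩).comp x (hld x hx.1)
      have h2 : HasDerivAt (fun u : ℝ => 2 / (σF * σ₀) *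
          (ψ (L (F (g (θ 0)))) - ψ (L (F (g (θ u))))) + ε * (u + 1))
          (2 / (σF * σ₀) * (-(ψ' (L (F (g (θ x)))) *
            (-‖gradient (fun q => L (F (g q))) (θ x)‖ ^ 2))) + ε * 1) x := by
        exact ((h1.const_sub _).const_mul _).add (((hasDerivAt_id x).add_const 1).const_mul ε)
      have h3 : 2 / (σF * σ₀) * (-(ψ' (L (F (g (θ x)))) *
            (-‖gradient (fun q => L (F (g q))) (θ x)‖ ^ 2))) + ε * 1 =
          2 / (σF * σ₀) *
            (ψ' (L (F (g (θ x)))) * ‖gradient (fun q => L (F (g q))) (θ x)‖ ^ 2) + ε := by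
        ring
      rw [h3] at h2
      exact h2.hasDerivWithinAt
    case c6 =>
      intro x hx heq
      have hx' : x ∈ Set.Icc (0:ℝ) t := ⟨hx.1, hx.2.le⟩
      have hball : θ x ∈ Metric.closedBall θ₀ R := by
        rw [Metric.mem_closedBall, dist_eq_norm]
        have h2 : 2 / (σF * σ₀) * (ψ (L (F (g (θ 0)))) - ψ (L (F (g (θ x))))) + ε * (x + 1)
            ≤ R' + ε * (t + 1) := by
          have hψx := hψnn x hx'
          have : 2 / (σF * σ₀) * (ψ (L (F (g (θ 0)))) - ψ (L (F (g (θ x)))))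
              ≤ 2 / (σF * σ₀) * ψ (L (F (g (θ 0)))) := by
            apply mul_le_mul_of_nonneg_left (by linarith) (by positivity)
          have hx2 : ε * (x + 1) ≤ ε * (t + 1) :=
            mul_le_mul_of_nonneg_left (by linarith [hx.2]) hεpos.le
          rw [hR'0]
          linarith
        rw [heq]
        linarith [hRt]
      have hm := hmain (θ x) hball (hrange x hx').1 (hrange x hx').2
      have hθ'x : ‖θ' x‖ = ‖gradient (fun q => L (F (g q))) (θ x)‖ := by
        rw [hflow x hx.1, norm_neg]
      rw [hθ'x]
      have hkey : ‖gradient (fun q => L (F (g q))) (θ x)‖ ≤ 2 / (σF * σ₀) *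
          (ψ' (L (F (g (θ x)))) * ‖gradient (fun q => L (F (g q))) (θ x)‖ ^ 2) := by
        have hs : (0:ℝ) < σF * σ₀ := by positivity
        rw [div_mul_eq_mul_div, le_div_iff₀ hs]
        nlinarith [mul_le_mul_of_nonneg_right hm
          (norm_nonneg (gradient (fun q => L (F (g q))) (θ x)))]
      linarith
  have hballmem : ∀ u ∈ Set.Icc (0:ℝ) t, θ u ∈ Metric.closedBall θ₀ R := by
    intro u hu
    rw [Metric.mem_closedBall, dist_eq_norm]
    have h1 := hfence u hu
    have hψu := hψnn u hu
    have h2 : 2 / (σF * σ₀) * (ψ (L (F (g (θ 0)))) - ψ (L (F (g (θ u)))))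
        ≤ 2 / (σF * σ₀) * ψ (L (F (g (θ 0)))) := by
      apply mul_le_mul_of_nonneg_left (by linarith) (by positivity)
    have h3 : ε * (u + 1) ≤ ε * (t + 1) :=
      mul_le_mul_of_nonneg_left (by linarith [hu.2]) hεpos.le
    rw [hR'0] at hRt
    linarith
  -- final monotonicity argument
  rcases eq_or_lt_of_le ht with heq | htlt
  · rw [← heq]
    simp
  · have hΦd : ∀ u ∈ Set.Icc (0:ℝ) t, HasDerivAt
        (fun u => Ψ (L (F (g (θ u)))) - σF ^ 2 * σ₀ ^ 2 / 4 * u)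
        (ψ' (L (F (g (θ u)))) ^ 2 * ‖gradient (fun q => L (F (g q))) (θ u)‖ ^ 2
          - σF ^ 2 * σ₀ ^ 2 / 4) u := by
      intro u hu
      have h1 : HasDerivAt (fun u => Ψ (L (F (g (θ u)))))
          (-(ψ' (L (F (g (θ u))))) ^ 2 * (-‖gradient (fun q => L (F (g q))) (θ u)‖ ^ 2)) u :=
        (hΨ _ ⟨(hrange u hu).1, (hrange u hu).2⟩).comp u (hld u hu.1)
      have h2 := h1.sub (((hasDerivAt_id u).const_mul (σF ^ 2 * σ₀ ^ 2 / 4)))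
      exact h2.congr_deriv (by ring)
    have hmono : MonotoneOn
        (fun u => Ψ (L (F (g (θ u)))) - σF ^ 2 * σ₀ ^ 2 / 4 * u) (Set.Icc 0 t) := by
      apply monotoneOn_of_deriv_nonneg (convex_Icc 0 t)
      · intro u hu
        exact (hΦd u hu).continuousAt.continuousWithinAt
      · intro x hx
        rw [interior_Icc] at hx
        exact (hΦd x ⟨hx.1.le, hx.2.le⟩).differentiableAt.differentiableWithinAt
      · intro x hx
        rw [interior_Icc] at hx
        have hx' : x ∈ Set.Icc (0:ℝ) t := ⟨hx.1.le, hx.2.le⟩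
        rw [(hΦd x hx').deriv]
        have hm := hmain (θ x) (hballmem x hx') (hrange x hx').1 (hrange x hx').2
        nlinarith [hm, mul_pos hσF hσ₀pos]
    have := hmono (Set.left_mem_Icc.2 ht) (Set.right_mem_Icc.2 ht) ht
    simp only [mul_zero, sub_zero] at this
    linarith
end

section
/- Assume additionally that y* ∈ ℝ^m is the unique global minimizer of L (i.e. Argmin L = {y*}). Then y(t) → y* as t → ∞. -/
open Filter MeasureTheory ProbabilityTheory
open scoped Topology NNReal
open InnerProductSpace

lemma aux_norm_sub_le {E : Type*} [NormedAddCommGroup E] [NormedSpace ℝ E]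
    {θ θ' : ℝ → E} {u u' : ℝ → ℝ} {c a b : ℝ} (hc : 0 < c) (hab : a ≤ b)
    (hθ : ∀ t ∈ Set.Icc a b, HasDerivAt θ (θ' t) t)
    (hu : ∀ t ∈ Set.Icc a b, HasDerivAt u (u' t) t)
    (hbound : ∀ t ∈ Set.Ico a b, c * ‖θ' t‖ ≤ -u' t) :
    ‖θ b - θ a‖ ≤ (u a - u b) / c := by
  have key := image_norm_le_of_norm_deriv_right_le_deriv_boundary'
    (f := fun t => θ t - θ a) (f' := θ') (a := a) (b := b)
    (B := fun t => (u a - u t) / c) (B' := fun t => -u' t / c)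
    (by
      intro t ht
      exact ((hθ t ht).sub_const (θ a)).continuousAt.continuousWithinAt)
    (by
      intro t ht
      exact ((hθ t (Set.Ico_subset_Icc_self ht)).sub_const (θ a)).hasDerivWithinAt)
    (by simp)
    (by
      intro t ht
      exact (((hasDerivAt_const t (u a)).sub (hu t ht)).div_const c).continuousAt.continuousWithinAt)
    (by
      intro t ht
      have := ((hasDerivAt_const t (u a)).sub (hu t (Set.Ico_subset_Icc_self ht))).div_const c
      simpa using this.hasDerivWithinAt)
    (by
      intro t ht
      rw [le_div_iff₀ hc, mul_comm]
      exact hbound t ht)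
  simpa using key (Set.right_mem_Icc.2 hab)

lemma aux_gradient_comp {E F : Type*} [NormedAddCommGroup E] [InnerProductSpace ℝ E]
    [CompleteSpace E] [NormedAddCommGroup F] [InnerProductSpace ℝ F] [CompleteSpace F]
    {L : F → ℝ} {g : E → F} {x : E}
    (hL : DifferentiableAt ℝ L (g x)) (hg : DifferentiableAt ℝ g x) :
    gradient (fun y => L (g y)) x
      = ContinuousLinearMap.adjoint (fderiv ℝ g x) (gradient L (g x)) := by
  have hcomp : fderiv ℝ (fun y => L (g y)) x = (fderiv ℝ L (g x)).comp (fderiv ℝ g x) :=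
    fderiv_comp x hL hg
  apply ext_inner_right ℝ
  intro v
  have h1 : ⟪gradient (fun y => L (g y)) x, v⟫_ℝ = fderiv ℝ (fun y => L (g y)) x v := by
    rw [gradient]
    exact InnerProductSpace.toDual_symm_apply
  have h2 : ⟪gradient L (g x), fderiv ℝ g x v⟫_ℝ = fderiv ℝ L (g x) (fderiv ℝ g x v) := by
    rw [gradient]
    exact InnerProductSpace.toDual_symm_apply
  rw [h1, hcomp, ContinuousLinearMap.adjoint_inner_left]
  exact h2.symm

lemma aux_fderiv_inner {F : Type*} [NormedAddCommGroup F] [InnerProductSpace ℝ F]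
    [CompleteSpace F] {f : F → ℝ} {x v : F} :
    fderiv ℝ f x v = ⟪gradient f x, v⟫_ℝ := by
  rw [gradient]
  exact InnerProductSpace.toDual_symm_apply.symm

lemma aux_antitoneOn {h h' : ℝ → ℝ} {a : ℝ}
    (hd : ∀ t ∈ Set.Ici a, HasDerivAt h (h' t) t)
    (hn : ∀ t ∈ Set.Ici a, h' t ≤ 0) : AntitoneOn h (Set.Ici a) := by
  apply antitoneOn_of_deriv_nonpos (convex_Ici a)
  · exact fun t ht => (hd t ht).continuousAt.continuousWithinAt
  · intro t ht
    rw [interior_Ici] at ht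
    exact (hd t (Set.mem_Ici.2 (le_of_lt (Set.mem_Ioi.1 ht)))).differentiableAt.differentiableWithinAt
  · intro t ht
    rw [interior_Ici] at ht
    rw [(hd t (Set.mem_Ici.2 (le_of_lt (Set.mem_Ioi.1 ht)))).deriv]
    exact hn t (Set.mem_Ici.2 (le_of_lt (Set.mem_Ioi.1 ht)))

lemma aux_div1 {a R : ℝ} (hR : 0 < R) : a / (2 * R) * R = a / 2 := by
  field_simp

lemma aux_div2 {a b x : ℝ} (ha : a ≠ 0) (hb : b ≠ 0) :
    2 / (a * b) * x = x / (a * b / 2) := by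
  field_simp

set_option maxHeartbeats 1000000 in
theorem stmt6
    {n m p : ℕ} (hn : 0 < n) (hm : 0 < m) (hp : 0 < p)
    (L : EuclideanSpace ℝ (Fin m) → ℝ)
    (F : EuclideanSpace ℝ (Fin n) → EuclideanSpace ℝ (Fin m))
    (g : EuclideanSpace ℝ (Fin p) → EuclideanSpace ℝ (Fin n))
    (hL : ContDiff ℝ 1 L)
    (hLnonneg : ∀ v, 0 ≤ L v) (hLmin : ∃ v, L v = 0)
    (hLgrad : ∀ s : Set (EuclideanSpace ℝ (Fin m)), Bornology.IsBounded s →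
      ∃ K : ℝ≥0, LipschitzOnWith K (fun v => gradient L v) s)
    (hF : ContDiff ℝ 1 F)
    (hJF : ∀ s : Set (EuclideanSpace ℝ (Fin n)), Bornology.IsBounded s →
      ∃ K : ℝ≥0, LipschitzOnWith K (fun x => fderiv ℝ F x) s)
    (hg : ContDiff ℝ 1 g)
    (hJg : ∀ s : Set (EuclideanSpace ℝ (Fin p)), Bornology.IsBounded s →
      ∃ K : ℝ≥0, LipschitzOnWith K (fun q => fderiv ℝ g q) s)
    (θ θ' : ℝ → EuclideanSpace ℝ (Fin p)) (θ₀ : EuclideanSpace ℝ (Fin p))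
    (hθ0 : θ 0 = θ₀)
    (hθd : ∀ t ≥ (0:ℝ), HasDerivAt θ (θ' t) t)
    (hθcont : ContinuousOn θ' (Set.Ici 0))
    (hflow : ∀ t ≥ (0:ℝ), θ' t = -gradient (fun q => L (F (g q))) (θ t))
    (r₀ : ℝ) (hr₀ : L (F (g (θ 0))) < r₀)
    (ψ ψ' : ℝ → ℝ) (hψ0 : ψ 0 = 0)
    (hψcont : ContinuousOn ψ (Set.Ico 0 r₀))
    (hψmono : StrictMonoOn ψ (Set.Ico 0 r₀))
    (hψd : ∀ s ∈ Set.Ioo (0:ℝ) r₀, HasDerivAt ψ (ψ' s) s)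
    (hKL : ∀ v : EuclideanSpace ℝ (Fin m), 0 < L v → L v < r₀ →
      1 ≤ ψ' (L v) * ‖gradient L v‖)
    (σF : ℝ) (hσF : 0 < σF)
    (σ₀ : ℝ) (hσ₀ : σ₀ = sigmaMin (fderiv ℝ g θ₀)) (hσ₀pos : 0 < σ₀)
    (R : ℝ) (hRpos : 0 < R)
    (hinj : ∀ q ∈ Metric.closedBall θ₀ R,
      gradient L (F (g q)) ∈ LinearMap.range (fderiv ℝ F (g q) : EuclideanSpace ℝ (Fin n) →ₗ[ℝ] EuclideanSpace ℝ (Fin m)) ∧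
      ∀ z ∈ LinearMap.range (fderiv ℝ F (g q) : EuclideanSpace ℝ (Fin n) →ₗ[ℝ] EuclideanSpace ℝ (Fin m)),
        σF * ‖z‖ ≤ ‖ContinuousLinearMap.adjoint (fderiv ℝ F (g q)) z‖)
    (hLip : ∀ a ∈ Metric.closedBall θ₀ R, ∀ b ∈ Metric.closedBall θ₀ R,
      ‖fderiv ℝ g a - fderiv ℝ g b‖ ≤ σ₀ / (2 * R) * ‖a - b‖)
    (R' : ℝ) (hRdef : R' = 2 / (σF * σ₀) * ψ (L (F (g θ₀)))) (hRR : R' < R)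
    (ystar : EuclideanSpace ℝ (Fin m))
    (hargmin : {v : EuclideanSpace ℝ (Fin m) | ∀ w, L v ≤ L w} = {ystar}) :
    Tendsto (fun t => F (g (θ t))) atTop (𝓝 ystar) := by
  classical
  have hgd : Differentiable ℝ g := hg.differentiable one_ne_zero
  have hFd : Differentiable ℝ F := hF.differentiable one_ne_zero
  have hLd : Differentiable ℝ L := hL.differentiable one_ne_zero
  have hfC : ContDiff ℝ 1 (fun q => L (F (g q))) := hL.comp (hF.comp hg)
  have hfd : Differentiable ℝ (fun q => L (F (g q))) := hfC.differentiable one_ne_zero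
  -- gradient formula
  have hgradf : ∀ q, gradient (fun q' => L (F (g q'))) q
      = ContinuousLinearMap.adjoint (fderiv ℝ g q)
        (ContinuousLinearMap.adjoint (fderiv ℝ F (g q)) (gradient L (F (g q)))) := by
    intro q
    have h1 := aux_gradient_comp (L := fun x => L (F x)) (g := g) (x := q)
      ((hLd _).comp _ (hFd _)) (hgd q)
    have h2 := aux_gradient_comp (L := L) (g := F) (x := g q) (hLd _) (hFd _)
    rw [h1, h2]
  have hminiz : ∀ v, L v = 0 → v = ystar := by
    intro v hv
    have hv2 : v ∈ {v : EuclideanSpace ℝ (Fin m) | ∀ w, L v ≤ L w} :=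
      fun w => hv ▸ hLnonneg w
    rw [hargmin] at hv2
    exact hv2
  -- derivative of h t := L (F (g (θ t)))
  have hh : ∀ t ≥ (0:ℝ), HasDerivAt (fun s => L (F (g (θ s)))) (-‖θ' t‖^2) t := by
    intro t ht
    have hde := ((hfd (θ t)).hasFDerivAt).comp_hasDerivAt t (hθd t ht)
    refine hde.congr_deriv ?_
    rw [aux_fderiv_inner, hflow t ht]
    rw [inner_neg_right, real_inner_self_eq_norm_sq, norm_neg]
  have hanti : AntitoneOn (fun s => L (F (g (θ s)))) (Set.Ici 0) :=
    aux_antitoneOn hh (fun t _ => neg_nonpos.mpr (sq_nonneg _))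
  by_cases hzero : ∃ t : ℝ, 0 ≤ t ∧ L (F (g (θ t))) = 0
  · -- the flow reaches a global minimum in finite time and stays there
    obtain ⟨t₁, ht₁, hft₁⟩ := hzero
    have hconst : ∀ t ≥ t₁, θ t = θ t₁ := by
      intro t ht
      have hcont : ContinuousOn θ (Set.Icc t₁ t) := fun s hs =>
        ((hθd s (le_trans ht₁ hs.1)).continuousAt).continuousWithinAt
      have hder : ∀ s ∈ Set.Ico t₁ t, HasDerivWithinAt θ 0 (Set.Ici s) s := by
        intro s hs
        have hs0 : (0:ℝ) ≤ s := le_trans ht₁ hs.1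
        have hfs : L (F (g (θ s))) = 0 := by
          have h1 : L (F (g (θ s))) ≤ L (F (g (θ t₁))) := hanti ht₁ hs0 hs.1
          have h2 := hLnonneg (F (g (θ s)))
          rw [hft₁] at h1
          linarith
        have hmin : IsLocalMin (fun q => L (F (g q))) (θ s) :=
          Filter.Eventually.of_forall (fun y => by
            simp only [hfs]; exact hLnonneg _)
        have hfz : fderiv ℝ (fun q => L (F (g q))) (θ s) = 0 := hmin.fderiv_eq_zero
        have hg0 : gradient (fun q => L (F (g q))) (θ s) = 0 := by
          rw [gradient, hfz]; simp
        have hθ'0 : θ' s = 0 := by rw [hflow s hs0, hg0, neg_zero]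
        simpa [hθ'0] using (hθd s hs0).hasDerivWithinAt
      exact constant_of_has_deriv_right_zero hcont hder t (Set.right_mem_Icc.2 ht)
    have hy1 : F (g (θ t₁)) = ystar := hminiz _ hft₁
    have heq : (fun t => F (g (θ t))) =ᶠ[atTop] fun _ => ystar := by
      filter_upwards [eventually_ge_atTop t₁] with t ht
      rw [hconst t ht, hy1]
    exact Tendsto.congr' heq.symm tendsto_const_nhds
  · -- the loss stays positive for all time
    push_neg at hzero
    have hpos : ∀ t ≥ (0:ℝ), 0 < L (F (g (θ t))) := fun t ht =>
      lt_of_le_of_ne (hLnonneg _) (Ne.symm (hzero t ht))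
    have hhr : ∀ t ≥ (0:ℝ), L (F (g (θ t))) < r₀ := fun t ht =>
      lt_of_le_of_lt (hanti (Set.self_mem_Ici) ht ht) hr₀
    have hr₀pos : 0 < r₀ := lt_of_le_of_lt (hLnonneg _) hr₀
    set c : ℝ := σF * σ₀ / 2 with hcdef
    have hcpos : 0 < c := by positivity
    set u : ℝ → ℝ := fun t => ψ (L (F (g (θ t)))) with hudef
    have hmemIco : ∀ t ≥ (0:ℝ), L (F (g (θ t))) ∈ Set.Ico 0 r₀ :=
      fun t ht => ⟨hLnonneg _, hhr t ht⟩
    have hupos : ∀ t ≥ (0:ℝ), 0 < u t := by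
      intro t ht
      have := hψmono (Set.mem_Ico.2 ⟨le_refl 0, hr₀pos⟩) (hmemIco t ht) (hpos t ht)
      rw [hψ0] at this
      exact this
    have huanti : ∀ a b : ℝ, 0 ≤ a → a ≤ b → u b ≤ u a := by
      intro a b ha hab
      exact hψmono.monotoneOn (hmemIco b (ha.trans hab)) (hmemIco a ha)
        (hanti ha (ha.trans hab) hab)
    have hud : ∀ t ≥ (0:ℝ), HasDerivAt u (ψ' (L (F (g (θ t)))) * -‖θ' t‖ ^ 2) t :=
      fun t ht => (hψd _ (Set.mem_Ioo.2 ⟨hpos t ht, hhr t ht⟩)).comp t (hh t ht)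
    -- lower bound on the adjoint of J_g on the ball of radius R
    have hJg2 : ∀ q ∈ Metric.closedBall θ₀ R, ∀ w : EuclideanSpace ℝ (Fin n),
        σ₀ / 2 * ‖w‖ ≤ ‖ContinuousLinearMap.adjoint (fderiv ℝ g q) w‖ := by
      intro q hq w
      rcases eq_or_ne w 0 with rfl | hw
      · simp
      · set w1 : EuclideanSpace ℝ (Fin n) := ‖w‖⁻¹ • w with hw1def
        have hw1 : ‖w1‖ = 1 := norm_smul_inv_norm (𝕜 := ℝ) hw
        have hbdd : BddBelow (Set.range fun v : {v : EuclideanSpace ℝ (Fin n) // ‖v‖ = 1} =>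
            ‖ContinuousLinearMap.adjoint (fderiv ℝ g θ₀) v.1‖) := by
          refine ⟨0, ?_⟩
          rintro x ⟨v, rfl⟩
          exact norm_nonneg _
        have h1 : σ₀ ≤ ‖ContinuousLinearMap.adjoint (fderiv ℝ g θ₀) w1‖ := by
          rw [hσ₀, sigmaMin]
          exact ciInf_le hbdd ⟨w1, hw1⟩
        have h2 : ‖ContinuousLinearMap.adjoint (fderiv ℝ g θ₀) w1
            - ContinuousLinearMap.adjoint (fderiv ℝ g q) w1‖ ≤ σ₀ / 2 := by
          have hms : ContinuousLinearMap.adjoint (fderiv ℝ g θ₀)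
              - ContinuousLinearMap.adjoint (fderiv ℝ g q)
              = ContinuousLinearMap.adjoint (fderiv ℝ g θ₀ - fderiv ℝ g q) :=
            (map_sub (ContinuousLinearMap.adjoint) _ _).symm
          have hstep : ‖ContinuousLinearMap.adjoint (fderiv ℝ g θ₀) w1
              - ContinuousLinearMap.adjoint (fderiv ℝ g q) w1‖
              ≤ ‖fderiv ℝ g θ₀ - fderiv ℝ g q‖ := by
            calc ‖ContinuousLinearMap.adjoint (fderiv ℝ g θ₀) w1
                - ContinuousLinearMap.adjoint (fderiv ℝ g q) w1‖
                = ‖(ContinuousLinearMap.adjoint (fderiv ℝ g θ₀)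
                    - ContinuousLinearMap.adjoint (fderiv ℝ g q)) w1‖ := by
                  rw [ContinuousLinearMap.sub_apply]
              _ ≤ ‖ContinuousLinearMap.adjoint (fderiv ℝ g θ₀)
                    - ContinuousLinearMap.adjoint (fderiv ℝ g q)‖ * ‖w1‖ :=
                  ContinuousLinearMap.le_opNorm _ _
              _ = ‖fderiv ℝ g θ₀ - fderiv ℝ g q‖ := by
                  rw [hms, hw1, mul_one, LinearIsometryEquiv.norm_map]
          have hlip := hLip θ₀ (Metric.mem_closedBall_self hRpos.le) q hq
          have hdist : ‖θ₀ - q‖ ≤ R := by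
            rw [← dist_eq_norm, dist_comm]
            exact hq
          have hR2 : σ₀ / (2 * R) * ‖θ₀ - q‖ ≤ σ₀ / 2 := by
            have h0 : 0 ≤ σ₀ / (2 * R) := by positivity
            calc σ₀ / (2 * R) * ‖θ₀ - q‖ ≤ σ₀ / (2 * R) * R :=
                mul_le_mul_of_nonneg_left hdist h0
              _ = σ₀ / 2 := aux_div1 hRpos
          linarith
        have h3 : σ₀ / 2 ≤ ‖ContinuousLinearMap.adjoint (fderiv ℝ g q) w1‖ := by
          have := norm_sub_norm_le (ContinuousLinearMap.adjoint (fderiv ℝ g θ₀) w1)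
            (ContinuousLinearMap.adjoint (fderiv ℝ g q) w1)
          linarith
        calc σ₀ / 2 * ‖w‖ = ‖w‖ * (σ₀ / 2) := by ring
          _ ≤ ‖w‖ * ‖ContinuousLinearMap.adjoint (fderiv ℝ g q) w1‖ :=
              mul_le_mul_of_nonneg_left h3 (norm_nonneg w)
          _ = ‖ContinuousLinearMap.adjoint (fderiv ℝ g q) w‖ := by
              rw [hw1def, ContinuousLinearMap.map_smul, norm_smul, norm_inv,
                Real.norm_of_nonneg (norm_nonneg w), ← mul_assoc,
                mul_inv_cancel₀ (norm_ne_zero_iff.2 hw), one_mul]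
    -- lower bound on the full gradient
    have hgradlb : ∀ q ∈ Metric.closedBall θ₀ R,
        c * ‖gradient L (F (g q))‖ ≤ ‖gradient (fun q' => L (F (g q'))) q‖ := by
      intro q hq
      obtain ⟨hmem, hFineq⟩ := hinj q hq
      have h2 := hFineq _ hmem
      rw [hgradf q]
      calc c * ‖gradient L (F (g q))‖ = σ₀ / 2 * (σF * ‖gradient L (F (g q))‖) := by
            rw [hcdef]; ring
        _ ≤ σ₀ / 2 * ‖ContinuousLinearMap.adjoint (fderiv ℝ F (g q))
              (gradient L (F (g q)))‖ :=
            mul_le_mul_of_nonneg_left h2 (by positivity)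
        _ ≤ ‖ContinuousLinearMap.adjoint (fderiv ℝ g q)
              (ContinuousLinearMap.adjoint (fderiv ℝ F (g q)) (gradient L (F (g q))))‖ :=
            hJg2 q hq _
    -- key differential inequality
    have hkey : ∀ s ≥ (0:ℝ), θ s ∈ Metric.closedBall θ₀ R →
        c * ‖θ' s‖ ≤ -(ψ' (L (F (g (θ s)))) * -‖θ' s‖ ^ 2) := by
      intro s hs hball
      have hKLs := hKL _ (hpos s hs) (hhr s hs)
      have hDpos : 0 < ‖gradient L (F (g (θ s)))‖ := by
        by_contra hD
        push_neg at hD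
        have : ‖gradient L (F (g (θ s)))‖ = 0 := le_antisymm hD (norm_nonneg _)
        rw [this, mul_zero] at hKLs
        linarith
      have hψpos : 0 < ψ' (L (F (g (θ s)))) := by
        by_contra hψp
        push_neg at hψp
        nlinarith
      have hGnorm : ‖θ' s‖ = ‖gradient (fun q' => L (F (g q'))) (θ s)‖ := by
        rw [hflow s hs, norm_neg]
      have hGlb : c * ‖gradient L (F (g (θ s)))‖ ≤ ‖θ' s‖ := by
        rw [hGnorm]; exact hgradlb _ hball
      rw [mul_neg, neg_neg]
      nlinarith [norm_nonneg (θ' s), mul_le_mul_of_nonneg_left hGlb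
        (mul_nonneg hψpos.le (norm_nonneg (θ' s)))]
    -- integral estimate
    have hest : ∀ a b : ℝ, 0 ≤ a → a ≤ b →
        (∀ s ∈ Set.Icc a b, θ s ∈ Metric.closedBall θ₀ R) →
        ‖θ b - θ a‖ ≤ (u a - u b) / c := by
      intro a b ha hab hball
      exact aux_norm_sub_le hcpos hab (fun t ht => hθd t (ha.trans ht.1))
        (fun t ht => hud t (ha.trans ht.1))
        (fun t ht => hkey t (ha.trans ht.1) (hball t (Set.Ico_subset_Icc_self ht)))
    have hR'eq : R' = u 0 / c := by
      rw [hRdef, hudef, hcdef]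
      simp only [hθ0]
      exact aux_div2 (ne_of_gt hσF) (ne_of_gt hσ₀pos)
    have hR'0 : 0 ≤ R' := by
      rw [hR'eq]
      exact div_nonneg (hupos 0 le_rfl).le hcpos.le
    -- the flow stays in the ball of radius R'
    have hballR' : ∀ t ≥ (0:ℝ), dist (θ t) θ₀ ≤ R' := by
      by_contra hcon
      push_neg at hcon
      obtain ⟨t₂, ht₂, hbad⟩ := hcon
      set bad : Set ℝ := {t : ℝ | 0 ≤ t ∧ R' < dist (θ t) θ₀} with hbaddef
      have hbadne : bad.Nonempty := ⟨t₂, ht₂, hbad⟩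
      have hbddb : BddBelow bad := ⟨0, fun x hx => hx.1⟩
      set τ := sInf bad with hτdef
      have hτ0 : 0 ≤ τ := le_csInf hbadne (fun x hx => hx.1)
      have hA : ∀ s, 0 ≤ s → s < τ → dist (θ s) θ₀ ≤ R' := by
        intro s hs hsτ
        by_contra hss
        push_neg at hss
        exact absurd (csInf_le hbddb ⟨hs, hss⟩) (not_le.2 hsτ)
      have hdistcont : ContinuousAt (fun t => dist (θ t) θ₀) τ :=
        ((hθd τ hτ0).continuousAt).dist continuousAt_const
      have hτle : dist (θ τ) θ₀ ≤ R' := by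
        rcases eq_or_lt_of_le hτ0 with h0 | h0
        · rw [← h0, hθ0, dist_self]; exact hR'0
        · have hev : ∀ᶠ s in 𝓝[<] τ, dist (θ s) θ₀ ≤ R' := by
            filter_upwards [Ioo_mem_nhdsLT_of_mem
              (Set.mem_Ioc.2 ⟨h0, le_refl τ⟩)] with s hs
            exact hA s hs.1.le hs.2
          exact le_of_tendsto hdistcont.continuousWithinAt hev
      have hτge : R' ≤ dist (θ τ) θ₀ := by
        by_contra hlt
        push_neg at hlt
        have hmem : {t : ℝ | dist (θ t) θ₀ < R'} ∈ 𝓝 τ :=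
          hdistcont.preimage_mem_nhds (Iio_mem_nhds hlt)
        obtain ⟨ε, hε, hball2⟩ := Metric.mem_nhds_iff.1 hmem
        obtain ⟨t3, ht3mem, ht3⟩ := exists_lt_of_csInf_lt hbadne
          (show sInf bad < τ + ε by rw [← hτdef]; linarith)
        have hd3 : dist t3 τ < ε := by
          have h1 : τ ≤ t3 := csInf_le hbddb ht3mem
          rw [Real.dist_eq, abs_lt]
          constructor <;> linarith
        have := hball2 (Metric.mem_ball.2 hd3)
        have h2 := ht3mem.2
        simp only [Set.mem_setOf_eq] at this
        linarith
      have hballs : ∀ s ∈ Set.Icc (0:ℝ) τ, θ s ∈ Metric.closedBall θ₀ R := by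
        intro s hs
        rcases lt_or_eq_of_le hs.2 with h | h
        · exact Metric.mem_closedBall.2 ((hA s hs.1 h).trans hRR.le)
        · rw [h]; exact Metric.mem_closedBall.2 (hτle.trans hRR.le)
      have hes := hest 0 τ le_rfl hτ0 hballs
      rw [hθ0] at hes
      have hfin : dist (θ τ) θ₀ ≤ R' - u τ / c := by
        rw [dist_eq_norm]
        calc ‖θ τ - θ₀‖ ≤ (u 0 - u τ) / c := hes
          _ = u 0 / c - u τ / c := by ring
          _ = R' - u τ / c := by rw [hR'eq]
      have huτ : 0 < u τ / c := div_pos (hupos τ hτ0) hcpos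
      linarith
    have hball : ∀ t ≥ (0:ℝ), θ t ∈ Metric.closedBall θ₀ R := fun t ht =>
      Metric.mem_closedBall.2 ((hballR' t ht).trans hRR.le)
    -- θ converges
    set l := sInf (u '' Set.Ici 0) with hldef
    have hlne : (u '' Set.Ici 0).Nonempty := ⟨u 0, ⟨0, Set.self_mem_Ici, rfl⟩⟩
    have hlbdd : BddBelow (u '' Set.Ici 0) := by
      refine ⟨0, ?_⟩
      rintro x ⟨t, ht, rfl⟩
      exact (hupos t ht).le
    have hlle : ∀ t ≥ (0:ℝ), l ≤ u t := fun t ht => csInf_le hlbdd ⟨t, ht, rfl⟩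
    have hcauchy : Cauchy (Filter.map θ atTop) := by
      rw [Metric.cauchy_iff]
      refine ⟨Filter.map_neBot, fun ε hε => ?_⟩
      have hllt : l < l + c * ε / 2 := by nlinarith
      obtain ⟨x, ⟨a, ha, rfl⟩, hx⟩ := exists_lt_of_csInf_lt hlne
        (show sInf (u '' Set.Ici 0) < l + c * ε / 2 by rw [← hldef]; exact hllt)
      have ha0 : (0:ℝ) ≤ a := ha
      have pair : ∀ s t : ℝ, a ≤ s → s ≤ t → dist (θ s) (θ t) ≤ (u a - l) / c := by
        intro s t hs hst
        have h0s : 0 ≤ s := ha0.trans hs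
        have h1 := hest s t h0s hst (fun r hr => hball r (h0s.trans hr.1))
        rw [dist_comm, dist_eq_norm]
        calc ‖θ t - θ s‖ ≤ (u s - u t) / c := h1
          _ ≤ (u a - l) / c := by
              have h2 := huanti a s ha0 hs
              have h3 := hlle t (h0s.trans hst)
              gcongr
      have hsmall : (u a - l) / c < ε / 2 := by
        rw [div_lt_iff₀ hcpos]
        linarith
      refine ⟨θ '' Set.Ici a, Filter.image_mem_map (Ici_mem_atTop a), ?_⟩
      rintro x ⟨s, hs, rfl⟩ y ⟨t, ht, rfl⟩
      rcases le_total s t with h | h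
      · have := pair s t hs h
        linarith
      · have := pair t s ht h
        rw [dist_comm] at this
        linarith
    obtain ⟨x, hx⟩ := CompleteSpace.complete hcauchy
    have hθlim : Tendsto θ atTop (𝓝 x) := hx
    have hylim : Tendsto (fun t => F (g (θ t))) atTop (𝓝 (F (g x))) :=
      ((hF.continuous.comp hg.continuous).tendsto x).comp hθlim
    have hLlim : Tendsto (fun t => L (F (g (θ t)))) atTop (𝓝 (L (F (g x)))) :=
      (hfC.continuous.tendsto x).comp hθlim
    have hxball : x ∈ Metric.closedBall θ₀ R := by
      have hevb : ∀ᶠ t in atTop, θ t ∈ Metric.closedBall θ₀ R := by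
        filter_upwards [eventually_ge_atTop (0:ℝ)] with t ht
        exact hball t ht
      exact Metric.isClosed_closedBall.mem_of_tendsto hθlim hevb
    by_cases hLx : L (F (g x)) = 0
    · rwa [hminiz _ hLx] at hylim
    · exfalso
      have hLxpos : 0 < L (F (g x)) := lt_of_le_of_ne (hLnonneg _) (Ne.symm hLx)
      have hLxlt : L (F (g x)) < r₀ := by
        have hle : L (F (g x)) ≤ L (F (g (θ 0))) := by
          apply le_of_tendsto hLlim
          filter_upwards [eventually_ge_atTop (0:ℝ)] with t ht
          exact hanti Set.self_mem_Ici ht ht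
        linarith
      have hKLx := hKL _ hLxpos hLxlt
      have hDpos : 0 < ‖gradient L (F (g x))‖ := by
        by_contra hD
        push_neg at hD
        have hD0 : ‖gradient L (F (g x))‖ = 0 := le_antisymm hD (norm_nonneg _)
        rw [hD0, mul_zero] at hKLx
        linarith
      have hGpos : 0 < ‖gradient (fun q => L (F (g q))) x‖ :=
        lt_of_lt_of_le (by positivity) (hgradlb x hxball)
      set δ := ‖gradient (fun q => L (F (g q))) x‖ / 2 with hδdef
      have hδpos : 0 < δ := by positivity
      have hgradcont : Continuous (fun q => gradient (fun q' => L (F (g q'))) q) := by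
        have hc : Continuous (fun q => fderiv ℝ (fun q' => L (F (g q'))) q) :=
          hfC.continuous_fderiv one_ne_zero
        exact (InnerProductSpace.toDual ℝ
          (EuclideanSpace ℝ (Fin p))).symm.continuous.comp hc
      have hnormtend : Tendsto (fun t => ‖gradient (fun q => L (F (g q))) (θ t)‖) atTop
          (𝓝 (‖gradient (fun q => L (F (g q))) x‖)) :=
        ((hgradcont.norm.tendsto x)).comp hθlim
      have hev : ∀ᶠ t in atTop, δ ≤ ‖gradient (fun q => L (F (g q))) (θ t)‖ :=
        hnormtend.eventually (eventually_ge_nhds (by rw [hδdef]; linarith))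
      obtain ⟨a, ha⟩ := eventually_atTop.1 (hev.and (eventually_ge_atTop (0:ℝ)))
      have ha0 : (0:ℝ) ≤ a := (ha a le_rfl).2
      have hH : AntitoneOn (fun t => L (F (g (θ t))) + δ ^ 2 * t) (Set.Ici a) := by
        apply aux_antitoneOn (h' := fun t => -‖θ' t‖ ^ 2 + δ ^ 2)
        · intro t ht
          have := (hh t (ha0.trans ht)).add ((hasDerivAt_id t).const_mul (δ ^ 2))
          exact this.congr_deriv (by ring)
        · intro t ht
          have h1 := (ha t ht).1
          have h2 : δ ≤ ‖θ' t‖ := by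
            rw [hflow t (ha0.trans ht), norm_neg]
            exact h1
          nlinarith
      set b := a + (L (F (g (θ a))) / δ ^ 2 + 1) with hbdef
      have hδ2 : 0 < δ ^ 2 := by positivity
      have hnn : 0 ≤ L (F (g (θ a))) / δ ^ 2 + 1 :=
        add_nonneg (div_nonneg (hLnonneg _) hδ2.le) zero_le_one
      have hab : a ≤ b := by rw [hbdef]; linarith
      have hmono := hH Set.self_mem_Ici (show b ∈ Set.Ici a from hab) hab
      have hLb := hLnonneg (F (g (θ b)))
      have hexp : δ ^ 2 * b = δ ^ 2 * a + δ ^ 2 * (L (F (g (θ a))) / δ ^ 2) + δ ^ 2 := by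
        rw [hbdef]; ring
      have hdivmul : δ ^ 2 * (L (F (g (θ a))) / δ ^ 2) = L (F (g (θ a))) := by
        field_simp
      rw [hdivmul] at hexp
      simp only [] at hmono
      linarith
end

section
/- Assume additionally that L is convex with unique global minimizer y := F(x̄) + ε (Argmin L = {y}), that L(y(0)) > 0, and let Ψ : (0, r₀) → ℝ be differentiable with Ψ'(s) = −ψ'(s)² on (0, r₀). Then for every s̄ ∈ (0, L(y(0))] with ψ(s̄) ≤ ‖ε‖ and every t ≥ 4·(Ψ(s̄) − Ψ(L(y(0))))/(σ_F²·σ₀²), one has the early-stopping bound ‖y(t) − F(x̄)‖ ≤ 2‖ε‖. -/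
set_option maxHeartbeats 1600000

open Filter MeasureTheory ProbabilityTheory
open scoped Topology NNReal

section Aux
open InnerProductSpace Set
open scoped RealInnerProductSpace

lemma right_deriv_ge' {ξ : ℝ → ℝ} {d c : ℝ} (hd : HasDerivAt ξ d 0)
    (h : ∀ ε : ℝ, 0 ≤ ε → ξ 0 - c * ε ≤ ξ ε) : -c ≤ d := by
  by_contra hlt
  push_neg at hlt
  rw [hasDerivAt_iff_tendsto_slope] at hd
  have h1 : Tendsto (slope ξ 0) (𝓝[>] 0) (𝓝 d) :=
    hd.mono_left (nhdsWithin_mono _ fun x hx => ne_of_gt hx)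
  have h2 : ∀ᶠ ε in 𝓝[>] (0:ℝ), slope ξ 0 ε < -c := h1.eventually_lt_const hlt
  obtain ⟨ε, hslope, hεpos⟩ := (h2.and self_mem_nhdsWithin).exists
  have hεpos' : (0:ℝ) < ε := hεpos
  have hs : slope ξ 0 ε = (ξ ε - ξ 0) / ε := by simp [slope_def_field]
  have hξ := h ε hεpos'.le
  have h3 : -c ≤ (ξ ε - ξ 0) / ε := by
    rw [le_div_iff₀ hεpos']; linarith
  rw [hs] at hslope; linarith

lemma exists_left_gt' {Φ : ℝ → ℝ} {a d : ℝ} (hd : HasDerivAt Φ d a) (hneg : d < 0)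
    {b : ℝ} (hb : b < a) : ∃ s, b < s ∧ s < a ∧ Φ a < Φ s := by
  rw [hasDerivAt_iff_tendsto_slope] at hd
  have h1 : Tendsto (slope Φ a) (𝓝[<] a) (𝓝 d) :=
    hd.mono_left (nhdsWithin_mono _ fun x hx => ne_of_lt hx)
  have h2 : ∀ᶠ s in 𝓝[<] a, slope Φ a s < 0 := h1.eventually_lt_const hneg
  have h3 : ∀ᶠ s in 𝓝[<] a, b < s :=
    eventually_nhdsWithin_of_eventually_nhds (eventually_gt_nhds hb)
  obtain ⟨s, ⟨hslope, hbs⟩, hsa⟩ := ((h2.and h3).and self_mem_nhdsWithin).exists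
  have hsa' : s < a := hsa
  refine ⟨s, hbs, hsa', ?_⟩
  rw [slope_def_field] at hslope
  have h4 : 0 < Φ s - Φ a := by
    rcases div_neg_iff.mp hslope with ⟨h5, h6⟩ | ⟨h5, h6⟩
    · linarith
    · linarith
  linarith

lemma hasGradientAt_comp' {E F : Type*} [NormedAddCommGroup E] [InnerProductSpace ℝ E]
    [CompleteSpace E] [NormedAddCommGroup F] [InnerProductSpace ℝ F] [CompleteSpace F]
    {φ : F → ℝ} {G : E → F} {q : E}
    (hφ : DifferentiableAt ℝ φ (G q)) (hG : DifferentiableAt ℝ G q) :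
    HasGradientAt (fun x => φ (G x))
      (ContinuousLinearMap.adjoint (fderiv ℝ G q) (gradient φ (G q))) q := by
  have h1 : HasFDerivAt (fun x => φ (G x))
      ((toDual ℝ F (gradient φ (G q))).comp (fderiv ℝ G q)) q :=
    (hφ.hasGradientAt.hasFDerivAt).comp q hG.hasFDerivAt
  rw [hasGradientAt_iff_hasFDerivAt]
  refine h1.congr_fderiv ?_
  ext w
  simp only [ContinuousLinearMap.coe_comp', Function.comp_apply, toDual_apply_apply,
    ContinuousLinearMap.adjoint_inner_left]

lemma error_bound' {m : ℕ}
    (L : EuclideanSpace ℝ (Fin m) → ℝ) (hL : ContDiff ℝ 1 L)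
    (hLnonneg : ∀ v, 0 ≤ L v)
    {r₀ : ℝ} (ψ ψ' : ℝ → ℝ) (hψ0 : ψ 0 = 0)
    (hψcont : ContinuousOn ψ (Set.Ico 0 r₀))
    (hψmono : StrictMonoOn ψ (Set.Ico 0 r₀))
    (hψd : ∀ s ∈ Set.Ioo (0:ℝ) r₀, HasDerivAt ψ (ψ' s) s)
    (hKL : ∀ v, 0 < L v → L v < r₀ → 1 ≤ ψ' (L v) * ‖gradient L v‖)
    (y : EuclideanSpace ℝ (Fin m)) (hLy : L y = 0)
    (hzero : ∀ v, L v = 0 → v = y)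
    (x : EuclideanSpace ℝ (Fin m)) (hx : L x < r₀) :
    ‖x - y‖ ≤ ψ (L x) := by
  have hr₀pos : 0 < r₀ := lt_of_le_of_lt (hLnonneg x) hx
  have hLdiff : Differentiable ℝ L := hL.differentiable one_ne_zero
  rcases eq_or_lt_of_le (hLnonneg x) with h0 | hpos
  · have hxy : x = y := hzero x h0.symm
    rw [hxy]
    simp [hLy, hψ0]
  set sst : ℝ := (L x + r₀) / 2 with hsst
  have hs1 : L x < sst := by rw [hsst]; linarith
  have hs2 : sst < r₀ := by rw [hsst]; linarith
  have hsstpos : 0 < sst := lt_trans hpos hs1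
  set k : EuclideanSpace ℝ (Fin m) → ℝ := fun w => min (L w) sst with hkdef
  have hkcont : Continuous k := (hLdiff.continuous).min continuous_const
  have hkmem : ∀ w, k w ∈ Set.Ico (0:ℝ) r₀ := fun w =>
    ⟨le_min (hLnonneg w) hsstpos.le, lt_of_le_of_lt (min_le_right _ _) hs2⟩
  set h : EuclideanSpace ℝ (Fin m) → ℝ := fun w => ψ (k w) with hhdef
  have hhcont : Continuous h := hψcont.comp_continuous hkcont hkmem
  have h0mem : (0:ℝ) ∈ Set.Ico (0:ℝ) r₀ := ⟨le_refl 0, hr₀pos⟩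
  have hnn : ∀ w, 0 ≤ h w := fun w => by
    simp only [hhdef]
    rw [← hψ0]
    exact hψmono.monotoneOn h0mem (hkmem w) (hkmem w).1
  have hhzero : ∀ w, h w = 0 → L w = 0 := by
    intro w hw
    have hk0 : k w = 0 := by
      by_contra hne
      have hkpos : 0 < k w := (hkmem w).1.lt_of_ne (Ne.symm hne)
      have h2 := hψmono h0mem (hkmem w) hkpos
      rw [hψ0] at h2
      simp only [hhdef] at hw
      linarith
    simp only [hkdef] at hk0
    rcases min_choice (L w) sst with hc | hc
    · rw [hk0] at hc; exact hc.symm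
    · exfalso; rw [hk0] at hc
      exact absurd hc.symm hsstpos.ne'
  have hxIco : L x ∈ Set.Ico (0:ℝ) r₀ := ⟨hpos.le, hx⟩
  have hψLx0 : 0 ≤ ψ (L x) := by
    rw [← hψ0]; exact hψmono.monotoneOn h0mem hxIco hpos.le
  have hhx : h x = ψ (L x) := by
    simp only [hhdef, hkdef]; rw [min_eq_left hs1.le]
  have key : ∀ α : ℝ, 0 < α → α < 1 → α * ‖y - x‖ ≤ ψ (L x) := by
    intro α hα0 hα1
    set ρ : ℝ := ψ (L x) / α + 1 with hρdef
    have hρpos : 0 < ρ := by positivity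
    set φ : EuclideanSpace ℝ (Fin m) → ℝ := fun w => h w + α * ‖w - x‖ with hφdef
    have hφc : Continuous φ :=
      hhcont.add (continuous_const.mul ((continuous_id.sub continuous_const).norm))
    have hxK : x ∈ Metric.closedBall x ρ := Metric.mem_closedBall_self hρpos.le
    obtain ⟨z, hzK, hzmin⟩ :=
      (isCompact_closedBall x ρ).exists_isMinOn ⟨x, hxK⟩ hφc.continuousOn
    have hφx : φ x = ψ (L x) := by
      simp only [hφdef]; rw [sub_self, norm_zero, mul_zero, add_zero, hhx]
    have hφzx : φ z ≤ ψ (L x) := by rw [← hφx]; exact hzmin hxK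
    have hglobal : ∀ w, φ z ≤ φ w := by
      intro w
      by_cases hw : w ∈ Metric.closedBall x ρ
      · exact hzmin hw
      · have hout : ρ < ‖w - x‖ := by
          simpa [Metric.mem_closedBall, dist_eq_norm] using hw
        have h5 : α * ρ < α * ‖w - x‖ := mul_lt_mul_of_pos_left hout hα0
        have hαρ : α * ρ = ψ (L x) + α := by
          rw [hρdef]; field_simp
        have h6 := hnn w
        have h7 := hφzx
        simp only [hφdef] at h7
        simp only [hφdef]
        linarith
    have hhz0 : h z = 0 := by
      by_contra hne
      have hzpos : 0 < h z := (hnn z).lt_of_ne (Ne.symm hne)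
      have hφz_ge : h z ≤ φ z := by
        simp only [hφdef]
        have : 0 ≤ α * ‖z - x‖ := by positivity
        linarith
      have hhzlt : h z < ψ sst := by
        have hmono := hψmono hxIco ⟨hsstpos.le, hs2⟩ hs1
        linarith
      have hLzlt : L z < sst := by
        by_contra hge
        push_neg at hge
        have hkz : k z = sst := min_eq_right hge
        simp only [hhdef, hkz] at hhzlt
        exact lt_irrefl _ hhzlt
      have hkz : k z = L z := min_eq_left hLzlt.le
      have hLzpos : 0 < L z := by
        by_contra hle
        push_neg at hle
        have hLz0 : L z = 0 := le_antisymm hle (hLnonneg z)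
        apply hne
        simp only [hhdef, hkz, hLz0, hψ0]
      have hLzmem : L z ∈ Set.Ioo (0:ℝ) r₀ := ⟨hLzpos, lt_trans hLzlt hs2⟩
      have hfd0 : HasFDerivAt (fun w => ψ (L w)) (ψ' (L z) • fderiv ℝ L z) z :=
        (hψd _ hLzmem).comp_hasFDerivAt z (hLdiff z).hasFDerivAt
      have heq : h =ᶠ[𝓝 z] (fun w => ψ (L w)) := by
        have hopen : IsOpen {w : EuclideanSpace ℝ (Fin m) | L w < sst} :=
          isOpen_lt hLdiff.continuous continuous_const
        filter_upwards [hopen.mem_nhds hLzlt] with w hw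
        simp only [hhdef, hkdef, min_eq_left (le_of_lt hw)]
      have hfd : HasFDerivAt h (ψ' (L z) • fderiv ℝ L z) z :=
        hfd0.congr_of_eventuallyEq heq
      set u := gradient L z with hu
      have hfg : fderiv ℝ L z = toDual ℝ (EuclideanSpace ℝ (Fin m)) u := by
        rw [hu, gradient, LinearIsometryEquiv.apply_symm_apply]
      set G : EuclideanSpace ℝ (Fin m) := ψ' (L z) • u with hGdef
      have hψ'pos : 0 < ψ' (L z) := by
        have hk := hKL z hLzpos hLzmem.2
        nlinarith [norm_nonneg (gradient L z)]
      have hGnorm : 1 ≤ ‖G‖ := by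
        rw [hGdef, norm_smul, Real.norm_eq_abs, abs_of_pos hψ'pos]
        exact hKL z hLzpos hLzmem.2
      have hcurve : HasDerivAt (fun ε : ℝ => z - ε • G) (-G) 0 := by
        have h1 : HasDerivAt (fun ε : ℝ => ε • G) G 0 := by
          simpa using (hasDerivAt_id (0:ℝ)).smul_const G
        simpa using h1.const_sub z
      have hfd' : HasFDerivAt h (ψ' (L z) • fderiv ℝ L z) ((fun ε : ℝ => z - ε • G) 0) := by
        simpa using hfd
      have hξd0 := hfd'.comp_hasDerivAt 0 hcurve
      have hval : (ψ' (L z) • fderiv ℝ L z) (-G) = -(‖G‖^2) := by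
        have h8 : fderiv ℝ L z (-G) = ⟪u, -G⟫ := by rw [hfg, toDual_apply_apply]
        have h9 : ⟪u, (-G : EuclideanSpace ℝ (Fin m))⟫ = -(ψ' (L z) * ⟪u, u⟫) := by
          rw [inner_neg_right, hGdef, real_inner_smul_right]
        have h10 : ⟪u, u⟫ = ‖u‖^2 := real_inner_self_eq_norm_sq u
        have h11 : ‖G‖ = ψ' (L z) * ‖u‖ := by
          rw [hGdef, norm_smul, Real.norm_eq_abs, abs_of_pos hψ'pos]
        rw [ContinuousLinearMap.smul_apply, h8, h9, h10, h11, smul_eq_mul]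
        ring
      have hξd : HasDerivAt (fun ε : ℝ => h (z - ε • G)) (-(‖G‖^2)) 0 := by
        rw [← hval]
        exact hξd0
      have hineq : ∀ ε : ℝ, 0 ≤ ε →
          (fun ε : ℝ => h (z - ε • G)) 0 - (α * ‖G‖) * ε ≤ (fun ε : ℝ => h (z - ε • G)) ε := by
        intro ε hε
        show h (z - (0:ℝ) • G) - (α * ‖G‖) * ε ≤ h (z - ε • G)
        have hg := hglobal (z - ε • G)
        simp only [hφdef] at hg
        have htri : ‖z - ε • G - x‖ ≤ ‖z - x‖ + ε * ‖G‖ := by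
          have hre : z - ε • G - x = (z - x) + (-(ε • G)) := by abel
          rw [hre]
          refine le_trans (norm_add_le _ _) ?_
          rw [norm_neg, norm_smul, Real.norm_eq_abs, abs_of_nonneg hε]
        have hz0 : z - (0:ℝ) • G = z := by simp
        rw [hz0]
        nlinarith [mul_le_mul_of_nonneg_left htri hα0.le]
      have hge := right_deriv_ge' hξd hineq
      have hGle : ‖G‖ ≤ α := by nlinarith
      linarith
    have hzy : z = y := hzero z (hhzero z hhz0)
    have hhy : h y = 0 := by
      simp only [hhdef, hkdef, hLy, min_eq_left hsstpos.le, hψ0]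
    have hφz : φ z = α * ‖y - x‖ := by
      simp only [hφdef, hzy, hhy, zero_add]
    rw [hφz] at hφzx
    exact hφzx
  by_contra hlt
  push_neg at hlt
  have hxy : ‖y - x‖ = ‖x - y‖ := norm_sub_rev y x
  have hpos' : 0 < ‖x - y‖ := lt_of_le_of_lt hψLx0 hlt
  set α : ℝ := (ψ (L x) / ‖x - y‖ + 1) / 2 with hα
  have hr1 : 0 ≤ ψ (L x) / ‖x - y‖ := by positivity
  have hr2 : ψ (L x) / ‖x - y‖ < 1 := (div_lt_one hpos').mpr hlt
  have hα0 : 0 < α := by rw [hα]; linarith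
  have hα1 : α < 1 := by rw [hα]; linarith
  have hk := key α hα0 hα1
  rw [hxy] at hk
  have hαval : α * ‖x - y‖ = (ψ (L x) + ‖x - y‖) / 2 := by
    rw [hα]; field_simp
  rw [hαval] at hk
  linarith

end Aux

theorem stmt7
    {n m p : ℕ} (hn : 0 < n) (hm : 0 < m) (hp : 0 < p)
    (L : EuclideanSpace ℝ (Fin m) → ℝ)
    (F : EuclideanSpace ℝ (Fin n) → EuclideanSpace ℝ (Fin m))
    (g : EuclideanSpace ℝ (Fin p) → EuclideanSpace ℝ (Fin n))
    (hL : ContDiff ℝ 1 L)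
    (hLnonneg : ∀ v, 0 ≤ L v) (hLmin : ∃ v, L v = 0)
    (hLgrad : ∀ s : Set (EuclideanSpace ℝ (Fin m)), Bornology.IsBounded s →
      ∃ K : ℝ≥0, LipschitzOnWith K (fun v => gradient L v) s)
    (hF : ContDiff ℝ 1 F)
    (hJF : ∀ s : Set (EuclideanSpace ℝ (Fin n)), Bornology.IsBounded s →
      ∃ K : ℝ≥0, LipschitzOnWith K (fun x => fderiv ℝ F x) s)
    (hg : ContDiff ℝ 1 g)
    (hJg : ∀ s : Set (EuclideanSpace ℝ (Fin p)), Bornology.IsBounded s →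
      ∃ K : ℝ≥0, LipschitzOnWith K (fun q => fderiv ℝ g q) s)
    (θ θ' : ℝ → EuclideanSpace ℝ (Fin p)) (θ₀ : EuclideanSpace ℝ (Fin p))
    (hθ0 : θ 0 = θ₀)
    (hθd : ∀ t ≥ (0:ℝ), HasDerivAt θ (θ' t) t)
    (hθcont : ContinuousOn θ' (Set.Ici 0))
    (hflow : ∀ t ≥ (0:ℝ), θ' t = -gradient (fun q => L (F (g q))) (θ t))
    (r₀ : ℝ) (hr₀ : L (F (g (θ 0))) < r₀)
    (ψ ψ' : ℝ → ℝ) (hψ0 : ψ 0 = 0)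
    (hψcont : ContinuousOn ψ (Set.Ico 0 r₀))
    (hψmono : StrictMonoOn ψ (Set.Ico 0 r₀))
    (hψd : ∀ s ∈ Set.Ioo (0:ℝ) r₀, HasDerivAt ψ (ψ' s) s)
    (hKL : ∀ v : EuclideanSpace ℝ (Fin m), 0 < L v → L v < r₀ →
      1 ≤ ψ' (L v) * ‖gradient L v‖)
    (σF : ℝ) (hσF : 0 < σF)
    (σ₀ : ℝ) (hσ₀ : σ₀ = sigmaMin (fderiv ℝ g θ₀)) (hσ₀pos : 0 < σ₀)
    (R : ℝ) (hRpos : 0 < R)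
    (hinj : ∀ q ∈ Metric.closedBall θ₀ R,
      gradient L (F (g q)) ∈ LinearMap.range (fderiv ℝ F (g q) : EuclideanSpace ℝ (Fin n) →ₗ[ℝ] EuclideanSpace ℝ (Fin m)) ∧
      ∀ z ∈ LinearMap.range (fderiv ℝ F (g q) : EuclideanSpace ℝ (Fin n) →ₗ[ℝ] EuclideanSpace ℝ (Fin m)),
        σF * ‖z‖ ≤ ‖ContinuousLinearMap.adjoint (fderiv ℝ F (g q)) z‖)
    (hLip : ∀ a ∈ Metric.closedBall θ₀ R, ∀ b ∈ Metric.closedBall θ₀ R,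
      ‖fderiv ℝ g a - fderiv ℝ g b‖ ≤ σ₀ / (2 * R) * ‖a - b‖)
    (R' : ℝ) (hRdef : R' = 2 / (σF * σ₀) * ψ (L (F (g θ₀)))) (hRR : R' < R)
    (xbar : EuclideanSpace ℝ (Fin n)) (ε y : EuclideanSpace ℝ (Fin m))
    (hy : y = F xbar + ε)
    (hconv : ConvexOn ℝ Set.univ L)
    (hargmin : {v : EuclideanSpace ℝ (Fin m) | ∀ w, L v ≤ L w} = {y})
    (hL0pos : 0 < L (F (g (θ 0))))
    (Ψ : ℝ → ℝ) (hΨ : ∀ s ∈ Set.Ioo (0:ℝ) r₀, HasDerivAt Ψ (-(ψ' s) ^ 2) s) :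
    ∀ sbar ∈ Set.Ioc (0:ℝ) (L (F (g (θ 0)))), ψ sbar ≤ ‖ε‖ →
      ∀ t ≥ (0:ℝ), 4 * (Ψ sbar - Ψ (L (F (g (θ 0))))) / (σF ^ 2 * σ₀ ^ 2) ≤ t →
        ‖F (g (θ t)) - F xbar‖ ≤ 2 * ‖ε‖ := by
  intro sbar hsbar hψsbar t ht hT
  have hr₀pos : (0:ℝ) < r₀ := lt_trans hL0pos hr₀
  have hdL : Differentiable ℝ L := hL.differentiable one_ne_zero
  have hdF : Differentiable ℝ F := hF.differentiable one_ne_zero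
  have hdg : Differentiable ℝ g := hg.differentiable one_ne_zero
  have hdG : ∀ q, DifferentiableAt ℝ (fun x => F (g x)) q := fun q =>
    DifferentiableAt.comp q (hdF _) (hdg q)
  have hdf : ∀ q, DifferentiableAt ℝ (fun q => L (F (g q))) q := fun q =>
    DifferentiableAt.comp q (hdL _) (hdG q)
  -- gradient decomposition
  have hgd : ∀ q, gradient (fun q => L (F (g q))) q =
      (ContinuousLinearMap.adjoint (fderiv ℝ g q))
        ((ContinuousLinearMap.adjoint (fderiv ℝ F (g q))) (gradient L (F (g q)))) := by
    intro q
    have h1 : HasGradientAt (fun x => L (F (g x)))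
        (ContinuousLinearMap.adjoint (fderiv ℝ (fun x => F (g x)) q) (gradient L (F (g q)))) q :=
      hasGradientAt_comp' (hdL _) (hdG q)
    have h2 : fderiv ℝ (fun x => F (g x)) q = (fderiv ℝ F (g q)).comp (fderiv ℝ g q) := by
      exact fderiv_comp q (hdF _) (hdg q)
    have h3 := ((hdf q).hasGradientAt).unique h1
    rw [h3, h2, ContinuousLinearMap.adjoint_comp]
    rfl
  -- sigma_min lower bound on the ball
  have hJglow : ∀ q ∈ Metric.closedBall θ₀ R, ∀ u : EuclideanSpace ℝ (Fin n),
      σ₀ / 2 * ‖u‖ ≤ ‖ContinuousLinearMap.adjoint (fderiv ℝ g q) u‖ := by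
    intro q hq u
    rcases eq_or_ne u 0 with rfl | hu
    · simp
    · have hupos : 0 < ‖u‖ := norm_pos_iff.mpr hu
      set w : EuclideanSpace ℝ (Fin n) := (‖u‖⁻¹ : ℝ) • u with hwdef
      have hw : ‖w‖ = 1 := norm_smul_inv_norm hu
      have h0 : σ₀ ≤ ‖ContinuousLinearMap.adjoint (fderiv ℝ g θ₀) w‖ := by
        rw [hσ₀, sigmaMin]
        exact ciInf_le ⟨0, by rintro x ⟨w', rfl⟩; exact norm_nonneg _⟩
          (⟨w, hw⟩ : {w : EuclideanSpace ℝ (Fin n) // ‖w‖ = 1})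
      have h1 : ContinuousLinearMap.adjoint (fderiv ℝ g θ₀) w
            - ContinuousLinearMap.adjoint (fderiv ℝ g q) w
          = (ContinuousLinearMap.adjoint (fderiv ℝ g θ₀ - fderiv ℝ g q)) w := by
        rw [map_sub]; rfl
      have h2 := (ContinuousLinearMap.adjoint (fderiv ℝ g θ₀ - fderiv ℝ g q)).le_opNorm w
      have h3 : ‖ContinuousLinearMap.adjoint (fderiv ℝ g θ₀ - fderiv ℝ g q)‖
          = ‖fderiv ℝ g θ₀ - fderiv ℝ g q‖ := LinearIsometryEquiv.norm_map _ _
      have h4 := hLip θ₀ (Metric.mem_closedBall_self hRpos.le) q hq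
      have h5 : ‖θ₀ - q‖ ≤ R := by
        rw [← dist_eq_norm, dist_comm]; exact Metric.mem_closedBall.mp hq
      have h6 : σ₀ / (2 * R) * ‖θ₀ - q‖ ≤ σ₀ / 2 := by
        have h7 : σ₀ / (2 * R) * ‖θ₀ - q‖ ≤ σ₀ / (2 * R) * R :=
          mul_le_mul_of_nonneg_left h5 (by positivity)
        have h8 : σ₀ / (2 * R) * R = σ₀ / 2 := by field_simp
        linarith
      have h9 : ‖ContinuousLinearMap.adjoint (fderiv ℝ g θ₀) w
          - ContinuousLinearMap.adjoint (fderiv ℝ g q) w‖ ≤ σ₀ / 2 := by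
        rw [h1]
        calc ‖(ContinuousLinearMap.adjoint (fderiv ℝ g θ₀ - fderiv ℝ g q)) w‖
            ≤ ‖ContinuousLinearMap.adjoint (fderiv ℝ g θ₀ - fderiv ℝ g q)‖ * ‖w‖ := h2
          _ = ‖fderiv ℝ g θ₀ - fderiv ℝ g q‖ := by rw [h3, hw, mul_one]
          _ ≤ σ₀ / (2 * R) * ‖θ₀ - q‖ := h4
          _ ≤ σ₀ / 2 := h6
      have h10 : σ₀ / 2 ≤ ‖ContinuousLinearMap.adjoint (fderiv ℝ g q) w‖ := by
        have h11 := norm_sub_norm_le (ContinuousLinearMap.adjoint (fderiv ℝ g θ₀) w)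
          (ContinuousLinearMap.adjoint (fderiv ℝ g q) w)
        linarith
      have h12 : ContinuousLinearMap.adjoint (fderiv ℝ g q) w
          = (‖u‖⁻¹ : ℝ) • ContinuousLinearMap.adjoint (fderiv ℝ g q) u := by
        rw [hwdef]
        exact (ContinuousLinearMap.adjoint (fderiv ℝ g q)).map_smul _ _
      have h13 : ‖ContinuousLinearMap.adjoint (fderiv ℝ g q) w‖
          = ‖u‖⁻¹ * ‖ContinuousLinearMap.adjoint (fderiv ℝ g q) u‖ := by
        rw [h12, norm_smul, Real.norm_eq_abs, abs_of_nonneg (by positivity)]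
      rw [h13] at h10
      have h14 := mul_le_mul_of_nonneg_left h10 hupos.le
      rw [← mul_assoc, mul_inv_cancel₀ hupos.ne', one_mul] at h14
      linarith
  -- gradient lower bound on the ball
  have hgradlow : ∀ q ∈ Metric.closedBall θ₀ R,
      σF * (σ₀ / 2) * ‖gradient L (F (g q))‖ ≤ ‖gradient (fun q => L (F (g q))) q‖ := by
    intro q hq
    rw [hgd q]
    have h1 := (hinj q hq).2 _ (hinj q hq).1
    have h2 := hJglow q hq (ContinuousLinearMap.adjoint (fderiv ℝ F (g q)) (gradient L (F (g q))))
    have h3 := mul_le_mul_of_nonneg_left h1 (by positivity : (0:ℝ) ≤ σ₀ / 2)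
    nlinarith [norm_nonneg (gradient L (F (g q)))]
  -- derivative of the loss along the flow
  have hℓd : ∀ s : ℝ, 0 ≤ s → HasDerivAt (fun r => L (F (g (θ r))))
      (-‖gradient (fun q => L (F (g q))) (θ s)‖^2) s := by
    intro s hs
    have h1 : HasGradientAt (fun q => L (F (g q)))
        (gradient (fun q => L (F (g q))) (θ s)) (θ s) := (hdf (θ s)).hasGradientAt
    have h2 := h1.hasFDerivAt.comp_hasDerivAt s (hθd s hs)
    have h3 : (InnerProductSpace.toDual ℝ (EuclideanSpace ℝ (Fin p))
        (gradient (fun q => L (F (g q))) (θ s))) (θ' s)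
        = -‖gradient (fun q => L (F (g q))) (θ s)‖^2 := by
      rw [InnerProductSpace.toDual_apply_apply, hflow s hs, inner_neg_right,
        real_inner_self_eq_norm_sq]
    rw [h3] at h2
    exact h2
  have hℓc : ContinuousOn (fun r => L (F (g (θ r)))) (Set.Ici (0:ℝ)) := fun s hs =>
    ((hℓd s hs).continuousAt).continuousWithinAt
  have hanti : AntitoneOn (fun r => L (F (g (θ r)))) (Set.Ici (0:ℝ)) := by
    apply antitoneOn_of_deriv_nonpos (convex_Ici 0) hℓc
    · intro s hs
      rw [interior_Ici] at hs
      exact ((hℓd s (le_of_lt hs)).differentiableAt).differentiableWithinAt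
    · intro s hs
      rw [interior_Ici] at hs
      rw [(hℓd s (le_of_lt hs)).deriv]
      have := sq_nonneg ‖gradient (fun q => L (F (g q))) (θ s)‖
      linarith
  -- main case split
  rcases (hLnonneg (F (g (θ t)))).eq_or_lt with h0 | hpos
  · -- loss already zero
    have hmem : F (g (θ t)) ∈ ({y} : Set (EuclideanSpace ℝ (Fin m))) := by
      rw [← hargmin]
      intro w'
      rw [← h0]
      exact hLnonneg w'
    have heqy : F (g (θ t)) = y := hmem
    rw [heqy, hy]
    have h1 : F xbar + ε - F xbar = ε := by abel
    rw [h1]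
    linarith [norm_nonneg ε]
  · -- positive loss at time t
    have hℓr₀ : ∀ s ∈ Set.Icc (0:ℝ) t, L (F (g (θ s))) < r₀ := fun s hs =>
      lt_of_le_of_lt (hanti Set.self_mem_Ici hs.1 hs.1) hr₀
    have hℓpos : ∀ s ∈ Set.Icc (0:ℝ) t, 0 < L (F (g (θ s))) := fun s hs =>
      lt_of_lt_of_le hpos (hanti hs.1 ht hs.2)
    have hkey : ∀ s ∈ Set.Icc (0:ℝ) t, θ s ∈ Metric.closedBall θ₀ R →
        σF * σ₀ / 2 ≤ ψ' (L (F (g (θ s)))) * ‖gradient (fun q => L (F (g q))) (θ s)‖ := by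
      intro s hs hball
      have h1 := hKL _ (hℓpos s hs) (hℓr₀ s hs)
      have h2 := hgradlow (θ s) hball
      have hψ'pos : 0 < ψ' (L (F (g (θ s)))) := by
        nlinarith [norm_nonneg (gradient L (F (g (θ s))))]
      nlinarith [mul_le_mul_of_nonneg_left h2 hψ'pos.le,
        mul_le_mul_of_nonneg_left h1 (by positivity : (0:ℝ) ≤ σF * σ₀ / 2)]
    -- the trapping claim
    have hθC : ContinuousOn θ (Set.Ici (0:ℝ)) := fun s hs =>
      (hθd s hs).continuousAt.continuousWithinAt
    have hψnn : ∀ s ∈ Set.Icc (0:ℝ) t, 0 ≤ ψ (L (F (g (θ s)))) := by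
      intro s hs
      rw [← hψ0]
      exact hψmono.monotoneOn ⟨le_rfl, hr₀pos⟩ ⟨hLnonneg _, hℓr₀ s hs⟩ (hLnonneg _)
    have hR'eq : R' = ψ (L (F (g (θ 0)))) * (2 / (σF * σ₀)) := by
      rw [hRdef, hθ0]; ring
    have hclaim : ∀ b ∈ Set.Icc (0:ℝ) t, (∀ s ∈ Set.Icc (0:ℝ) b, θ s ∈ Metric.closedBall θ₀ R) →
        ∀ s ∈ Set.Icc (0:ℝ) b, ‖θ s - θ₀‖ ≤ R' := by
      intro b hb hball
      have hmem' : ∀ s ∈ Set.Icc (0:ℝ) b, s ∈ Set.Icc (0:ℝ) t := fun s hs =>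
        ⟨hs.1, le_trans hs.2 hb.2⟩
      have hcont : ContinuousOn (fun s : ℝ => θ s - θ₀) (Set.Icc 0 b) :=
        (hθC.mono (fun s hs => hs.1)).sub continuousOn_const
      have hfd' : ∀ s ∈ Set.Ico (0:ℝ) b, HasDerivWithinAt (fun r => θ r - θ₀) (θ' s)
          (Set.Ici s) s := fun s hs => ((hθd s hs.1).sub_const θ₀).hasDerivWithinAt
      have hBcont : ContinuousOn
          (fun s => (ψ (L (F (g (θ 0)))) - ψ (L (F (g (θ s))))) * (2 / (σF * σ₀)))
          (Set.Icc 0 b) := by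
        apply ContinuousOn.mul _ continuousOn_const
        apply ContinuousOn.sub continuousOn_const
        apply hψcont.comp (hℓc.mono (fun s hs => hs.1))
        intro s hs
        exact ⟨hLnonneg _, hℓr₀ s (hmem' s hs)⟩
      have hBd : ∀ s ∈ Set.Ico (0:ℝ) b, HasDerivWithinAt
          (fun s => (ψ (L (F (g (θ 0)))) - ψ (L (F (g (θ s))))) * (2 / (σF * σ₀)))
          (ψ' (L (F (g (θ s)))) * ‖gradient (fun q => L (F (g q))) (θ s)‖^2 * (2 / (σF * σ₀)))
          (Set.Ici s) s := by
        intro s hs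
        have hsIcc : s ∈ Set.Icc (0:ℝ) t := hmem' s ⟨hs.1, hs.2.le⟩
        have h1 : HasDerivAt (fun r => ψ (L (F (g (θ r)))))
            (ψ' (L (F (g (θ s)))) * (-‖gradient (fun q => L (F (g q))) (θ s)‖^2)) s :=
          (hψd _ ⟨hℓpos s hsIcc, hℓr₀ s hsIcc⟩).comp s (hℓd s hs.1)
        have h2 := (h1.const_sub (ψ (L (F (g (θ 0)))))).mul_const (2 / (σF * σ₀))
        have h3 : -(ψ' (L (F (g (θ s)))) * -‖gradient (fun q => L (F (g q))) (θ s)‖ ^ 2)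
              * (2 / (σF * σ₀))
            = ψ' (L (F (g (θ s)))) * ‖gradient (fun q => L (F (g q))) (θ s)‖^2
              * (2 / (σF * σ₀)) := by ring
        rw [h3] at h2
        exact h2.hasDerivWithinAt
      have hbound : ∀ s ∈ Set.Ico (0:ℝ) b, ‖θ' s‖ ≤
          ψ' (L (F (g (θ s)))) * ‖gradient (fun q => L (F (g q))) (θ s)‖^2 * (2 / (σF * σ₀)) := by
        intro s hs
        have hsIcc : s ∈ Set.Icc (0:ℝ) t := hmem' s ⟨hs.1, hs.2.le⟩
        have hk := hkey s hsIcc (hball s ⟨hs.1, hs.2.le⟩)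
        rw [hflow s hs.1, norm_neg]
        have hk2c : (2 / (σF * σ₀)) * (σF * σ₀ / 2) = 1 := by field_simp
        nlinarith [norm_nonneg (gradient (fun q => L (F (g q))) (θ s)),
          mul_le_mul_of_nonneg_left hk
            (mul_nonneg (by positivity : (0:ℝ) ≤ 2 / (σF * σ₀))
              (norm_nonneg (gradient (fun q => L (F (g q))) (θ s))))]
      have h0B : ‖θ 0 - θ₀‖ ≤ (ψ (L (F (g (θ 0)))) - ψ (L (F (g (θ 0))))) * (2 / (σF * σ₀)) := by
        rw [hθ0, sub_self, norm_zero, sub_self, zero_mul]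
      have hmain := image_norm_le_of_norm_deriv_right_le_deriv_boundary'
        hcont hfd' h0B hBcont hBd hbound
      intro s hs
      have h1 := hmain hs
      have h2 := hψnn s (hmem' s hs)
      have h3 : (ψ (L (F (g (θ 0)))) - ψ (L (F (g (θ s))))) * (2 / (σF * σ₀)) ≤ R' := by
        rw [hR'eq]
        have : (0:ℝ) ≤ 2 / (σF * σ₀) := by positivity
        nlinarith
      linarith
    -- bootstrap
    have hSSne : ({b : ℝ | b ∈ Set.Icc (0:ℝ) t ∧
        ∀ s ∈ Set.Icc (0:ℝ) b, θ s ∈ Metric.closedBall θ₀ R} : Set ℝ).Nonempty := by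
      refine ⟨0, ⟨le_rfl, ht⟩, ?_⟩
      intro s hs
      have hs0 : s = 0 := le_antisymm hs.2 hs.1
      rw [hs0, hθ0]
      exact Metric.mem_closedBall_self hRpos.le
    have hbddSS : BddAbove {b : ℝ | b ∈ Set.Icc (0:ℝ) t ∧
        ∀ s ∈ Set.Icc (0:ℝ) b, θ s ∈ Metric.closedBall θ₀ R} :=
      ⟨t, fun b hb => hb.1.2⟩
    set SS := {b : ℝ | b ∈ Set.Icc (0:ℝ) t ∧
        ∀ s ∈ Set.Icc (0:ℝ) b, θ s ∈ Metric.closedBall θ₀ R} with hSSdef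
    set bs := sSup SS with hbsdef
    have h0SS : (0:ℝ) ∈ SS := by
      refine ⟨⟨le_rfl, ht⟩, ?_⟩
      intro s hs
      have hs0 : s = 0 := le_antisymm hs.2 hs.1
      rw [hs0, hθ0]
      exact Metric.mem_closedBall_self hRpos.le
    have hbs0 : 0 ≤ bs := le_csSup hbddSS h0SS
    have hbst : bs ≤ t := csSup_le hSSne (fun b hb => hb.1.2)
    have hbsIn : ∀ s, 0 ≤ s → s < bs → θ s ∈ Metric.closedBall θ₀ R := by
      intro s hs0 hsb
      obtain ⟨b, hbSS, hsb'⟩ := exists_lt_of_lt_csSup hSSne hsb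
      exact hbSS.2 s ⟨hs0, hsb'.le⟩
    have hbsSS : bs ∈ SS := by
      refine ⟨⟨hbs0, hbst⟩, ?_⟩
      intro s hs
      rcases lt_or_eq_of_le hs.2 with hlt | heq
      · exact hbsIn s hs.1 hlt
      · rcases eq_or_lt_of_le hbs0 with hbs0' | hbspos
        · rw [heq, ← hbs0', hθ0]
          exact Metric.mem_closedBall_self hRpos.le
        · rw [heq]
          have hcontb : ContinuousWithinAt θ (Set.Iio bs) bs :=
            ((hθd bs hbs0).continuousAt).continuousWithinAt
          have hev : ∀ᶠ s' in 𝓝[<] bs, θ s' ∈ Metric.closedBall θ₀ R := by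
            have h1 : ∀ᶠ s' in 𝓝[<] bs, 0 < s' :=
              eventually_nhdsWithin_of_eventually_nhds (eventually_gt_nhds hbspos)
            filter_upwards [h1, self_mem_nhdsWithin] with s' h2 h3
            exact hbsIn s' h2.le h3
          exact Metric.isClosed_closedBall.mem_of_tendsto hcontb hev
    have hbseq : bs = t := by
      by_contra hne
      have hbslt : bs < t := lt_of_le_of_ne hbst hne
      have hR' := hclaim bs ⟨hbs0, hbst⟩ hbsSS.2
      have hRb : dist (θ bs) θ₀ ≤ R' := by
        rw [dist_eq_norm]; exact hR' bs ⟨hbs0, le_rfl⟩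
      have hcb : ContinuousAt (fun s => dist (θ s) θ₀) bs :=
        ((hθd bs hbs0).continuousAt).dist continuousAt_const
      have hev : ∀ᶠ s in 𝓝 bs, dist (θ s) θ₀ < R :=
        hcb.eventually_lt_const (lt_of_le_of_lt hRb hRR)
      obtain ⟨δ, hδpos, hδ⟩ := Metric.eventually_nhds_iff.mp hev
      have hb2gt : bs < min (bs + δ/2) t := lt_min (by linarith) hbslt
      have hb2mem : min (bs + δ/2) t ∈ SS := by
        refine ⟨⟨le_trans hbs0 hb2gt.le, min_le_right _ _⟩, ?_⟩
        intro s hs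
        rcases le_or_gt s bs with h1 | h1
        · exact hbsSS.2 s ⟨hs.1, h1⟩
        · have h2 : dist s bs < δ := by
            rw [Real.dist_eq, abs_of_pos (by linarith)]
            have h3 : s ≤ bs + δ/2 := le_trans hs.2 (min_le_left _ _)
            linarith
          exact Metric.mem_closedBall.mpr (hδ h2).le
      have := le_csSup hbddSS hb2mem
      linarith
    have hball : ∀ s ∈ Set.Icc (0:ℝ) t, θ s ∈ Metric.closedBall θ₀ R := by
      rw [← hbseq]
      exact hbsSS.2
    -- the loss at time t is below sbar
    have hsbarIoo : sbar ∈ Set.Ioo (0:ℝ) r₀ := ⟨hsbar.1, lt_of_le_of_lt hsbar.2 hr₀⟩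
    have hℓt_le : L (F (g (θ t))) ≤ sbar := by
      by_contra hgt
      push_neg at hgt
      have hχd : ∀ s ∈ Set.Icc (0:ℝ) t, HasDerivAt
          (fun r => Ψ (L (F (g (θ r)))) - σF^2 * σ₀^2 / 4 * r)
          (ψ' (L (F (g (θ s)))) ^ 2 * ‖gradient (fun q => L (F (g q))) (θ s)‖ ^ 2
            - σF^2 * σ₀^2 / 4) s := by
        intro s hs
        have h1 := (hΨ _ ⟨hℓpos s hs, hℓr₀ s hs⟩).comp s (hℓd s hs.1)
        have h2 : HasDerivAt (fun r : ℝ => σF^2 * σ₀^2 / 4 * r) (σF^2 * σ₀^2 / 4) s := by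
          simpa using (hasDerivAt_id s).const_mul (σF^2 * σ₀^2 / 4)
        have h3 := h1.sub h2
        exact h3.congr_deriv (by ring)
      have hmono : MonotoneOn (fun r => Ψ (L (F (g (θ r)))) - σF^2 * σ₀^2 / 4 * r)
          (Set.Icc (0:ℝ) t) := by
        apply monotoneOn_of_deriv_nonneg (convex_Icc 0 t)
          (fun s hs => (hχd s hs).continuousAt.continuousWithinAt)
        · rw [interior_Icc]
          exact fun s hs => ((hχd s ⟨hs.1.le, hs.2.le⟩).differentiableAt).differentiableWithinAt
        · rw [interior_Icc]
          intro s hs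
          rw [(hχd s ⟨hs.1.le, hs.2.le⟩).deriv]
          have hk := hkey s ⟨hs.1.le, hs.2.le⟩ (hball s ⟨hs.1.le, hs.2.le⟩)
          have h5 : (σF * σ₀ / 2)^2 ≤ (ψ' (L (F (g (θ s))))
              * ‖gradient (fun q => L (F (g q))) (θ s)‖)^2 :=
            pow_le_pow_left₀ (by positivity) hk 2
          nlinarith
      have h4 : Ψ (L (F (g (θ 0)))) - σF^2 * σ₀^2 / 4 * 0
          ≤ Ψ (L (F (g (θ t)))) - σF^2 * σ₀^2 / 4 * t :=
        hmono ⟨le_rfl, ht⟩ ⟨ht, le_rfl⟩ ht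
      have h5 : Ψ sbar - Ψ (L (F (g (θ 0)))) ≤ σF^2 * σ₀^2 / 4 * t := by
        rw [div_le_iff₀ (by positivity : (0:ℝ) < σF^2 * σ₀^2)] at hT
        linarith
      have h6 : Ψ sbar ≤ Ψ (L (F (g (θ t)))) := by linarith
      have hΨanti : AntitoneOn Ψ (Set.Ioo 0 r₀) := by
        apply antitoneOn_of_deriv_nonpos (convex_Ioo 0 r₀)
          (fun s hs => (hΨ s hs).continuousAt.continuousWithinAt)
        · rw [interior_Ioo]
          exact fun s hs => ((hΨ s hs).differentiableAt).differentiableWithinAt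
        · rw [interior_Ioo]
          intro s hs
          rw [(hΨ s hs).deriv]
          have := sq_nonneg (ψ' s)
          linarith
      have hℓtIoo : L (F (g (θ t))) ∈ Set.Ioo (0:ℝ) r₀ := ⟨hpos, hℓr₀ t ⟨ht, le_rfl⟩⟩
      have hψ't : 0 < ψ' (L (F (g (θ t)))) := by
        have h7 := hKL _ hpos hℓtIoo.2
        nlinarith [norm_nonneg (gradient L (F (g (θ t))))]
      obtain ⟨s, hs1, hs2, hs3⟩ := exists_left_gt' (hΨ _ hℓtIoo)
        (by nlinarith : -(ψ' (L (F (g (θ t))))) ^ 2 < 0) hgt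
      have hsIoo : s ∈ Set.Ioo (0:ℝ) r₀ := ⟨lt_trans hsbarIoo.1 hs1, lt_trans hs2 hℓtIoo.2⟩
      have h8 : Ψ s ≤ Ψ sbar := hΨanti hsbarIoo hsIoo hs1.le
      linarith
    -- error bound and conclusion
    have hy0 : L y = 0 := by
      obtain ⟨v, hv⟩ := hLmin
      have hvmem : v ∈ ({y} : Set (EuclideanSpace ℝ (Fin m))) := by
        rw [← hargmin]
        intro w'
        rw [hv]
        exact hLnonneg w'
      have hveq : v = y := hvmem
      rw [← hveq]
      exact hv
    have hzero : ∀ v, L v = 0 → v = y := by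
      intro v hv
      have hvmem : v ∈ ({y} : Set (EuclideanSpace ℝ (Fin m))) := by
        rw [← hargmin]
        intro w'
        rw [hv]
        exact hLnonneg w'
      exact hvmem
    have heb := error_bound' L hL hLnonneg ψ ψ' hψ0 hψcont hψmono hψd hKL y hy0 hzero
      (F (g (θ t))) (hℓr₀ t ⟨ht, le_rfl⟩)
    have hψle : ψ (L (F (g (θ t)))) ≤ ψ sbar :=
      hψmono.monotoneOn ⟨hLnonneg _, hℓr₀ t ⟨ht, le_rfl⟩⟩ ⟨hsbar.1.le, hsbarIoo.2⟩ hℓt_le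
    have hfinal : F (g (θ t)) - F xbar = (F (g (θ t)) - y) + ε := by rw [hy]; abel
    calc ‖F (g (θ t)) - F xbar‖ = ‖(F (g (θ t)) - y) + ε‖ := by rw [hfinal]
      _ ≤ ‖F (g (θ t)) - y‖ + ‖ε‖ := norm_add_le _ _
      _ ≤ 2 * ‖ε‖ := by linarith
end
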